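/- arXiv:2401.00842 — 6 statements merged into one kernel-verified Lean document; each statement's English description precedes it below -/
import Mathlib

section
/- Let L be a lattice with at least two elements and let n, k be positive integers. If L^n contains no antichain of size k (equivalently, every k-element subset of L^n contains two comparable elements), then the direct power L^k cannot be generated by n elements. -/
/-- If `L` is a nontrivial lattice and `L^n` has no antichain of
size `k`, then `L^k` is not generated by `n` elements. -/
theorem stmt_0 (L : Type*) [Lattice L] [Nontrivial L] (n k : ℕ)
    (hn : 0 < n) (hk : 0 < k)
    (hantichain : ¬ ∃ A : Finset (Fin n → L), A.card = k ∧
      IsAntichain (· ≤ ·) (A : Set (Fin n → L))) :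
    ¬ ∃ g : Fin n → (Fin k → L),
      latticeClosure (Set.range g) = Set.univ := by
  rintro ⟨g, hg⟩
  obtain ⟨x, y, hxy⟩ := exists_pair_ne L
  have hab : x ⊓ y < x ⊔ y := inf_lt_sup.mpr hxy
  set a := x ⊓ y
  set b := x ⊔ y
  -- the "columns" of the generators
  set v : Fin k → (Fin n → L) := fun j i => g i j with hv
  -- key: columns are pairwise incomparable
  have key : ∀ j j' : Fin k, j ≠ j' → ¬ v j ≤ v j' := by
    intro j j' hjj' hle
    have hsub : IsSublattice {x : Fin k → L | x j ≤ x j'} := by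
      constructor
      · intro x hx y hy
        exact sup_le_sup hx hy
      · intro x hx y hy
        exact inf_le_inf hx hy
    have hsubset : latticeClosure (Set.range g) ⊆ {x : Fin k → L | x j ≤ x j'} := by
      apply latticeClosure_min _ hsub
      rintro _ ⟨i, rfl⟩
      exact hle i
    have : (fun m : Fin k => if m = j then b else a) ∈ {x : Fin k → L | x j ≤ x j'} := by
      apply hsubset
      rw [hg]; trivial
    simp only [Set.mem_setOf_eq, if_pos rfl, if_neg (Ne.symm hjj')] at this
    exact absurd this (not_le_of_gt hab)
  have hinj : Function.Injective v := by
    intro j j' h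
    by_contra hne
    exact key j j' hne (le_of_eq h)
  classical
  apply hantichain
  refine ⟨Finset.image v Finset.univ, ?_, ?_⟩
  · rw [Finset.card_image_of_injective _ hinj, Finset.card_univ, Fintype.card_fin]
  · rintro x hx y hy hxy hle
    simp only [Finset.coe_image, Set.mem_image] at hx hy
    obtain ⟨j, -, rfl⟩ := hx
    obtain ⟨j', -, rfl⟩ := hy
    exact key j j' (fun h => hxy (congrArg v h)) hle
end

section
/- Let F be a field, d ≥ 3 an integer, V = F^d, and L = Sub(V) its subspace lattice. Let t be the minimum cardinality of a generating set of F as a field, let M = ⌊d²/4⌋, and let m = ⌈t/M⌉ (the least cardinal m with m·M ≥ t). Then every generating set of L has cardinality at least m. Equivalently, if L is generated by m elements, then m·⌊d²/4⌋ ≥ t. -/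
open Submodule Set Module

set_option synthInstance.maxHeartbeats 1000000
set_option maxHeartbeats 1000000

namespace Stmt8Aux
open Submodule Set Module

variable {F : Type*} [Field F] {d : ℕ}

noncomputable def iota (K : Subfield F) : (Fin d → K) →ₗ[K] (Fin d → F) where
  toFun x := fun j => algebraMap K F (x j)
  map_add' x y := by funext j; simp
  map_smul' c x := by
    funext j
    simp only [Pi.smul_apply, RingHom.id_apply, Algebra.smul_def]
    simp

variable (K : Subfield F)

lemma iota_apply (x : Fin d → K) (j : Fin d) : iota K x j = (x j : F) := rfl

lemma algmap (y : K) : algebraMap K F y = (y : F) := rfl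

lemma li_map {k : ℕ} {v : Fin k → (Fin d → K)} (hv : LinearIndependent K v) :
    LinearIndependent F (fun i => iota K (v i)) := by
  classical
  set M : Matrix (Fin d) (Fin k) K := Matrix.of fun j i => v i j with hM
  have hker : LinearMap.ker (Matrix.toLin' M) = ⊥ := by
    rw [LinearMap.ker_eq_bot']
    intro c hc
    rw [Fintype.linearIndependent_iff] at hv
    have h0 : ∑ i, c i • v i = 0 := by
      funext j
      have := congrFun hc j
      simpa [Matrix.toLin'_apply, Matrix.mulVec, dotProduct, hM, mul_comm,
        Finset.sum_apply, algmap] using this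
    funext i
    exact hv c h0 i
  obtain ⟨ψ, hψ⟩ := LinearMap.exists_leftInverse_of_injective _ hker
  set B := LinearMap.toMatrix' ψ with hB
  have hBM : B * M = 1 := by
    have := congrArg LinearMap.toMatrix' hψ
    rwa [LinearMap.toMatrix'_comp, LinearMap.toMatrix'_toLin', LinearMap.toMatrix'_id] at this
  have hBMF : (B.map (algebraMap K F)) * (M.map (algebraMap K F)) = 1 := by
    rw [← Matrix.map_mul, hBM, Matrix.map_one (algebraMap K F) (map_zero _) (map_one _)]
  rw [Fintype.linearIndependent_iff]
  intro c hc i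
  have hvec : (M.map (algebraMap K F)).mulVec c = 0 := by
    funext j
    have := congrFun hc j
    simpa [Matrix.mulVec, dotProduct, hM, iota_apply, mul_comm,
      Finset.sum_apply, algmap] using this
  have hc0 : c = 0 := by
    calc c = (1 : Matrix (Fin k) (Fin k) F).mulVec c := (Matrix.one_mulVec c).symm
    _ = (B.map (algebraMap K F)).mulVec ((M.map (algebraMap K F)).mulVec c) := by rw [← hBMF, ← Matrix.mulVec_mulVec]
    _ = 0 := by rw [hvec, Matrix.mulVec_zero]
  exact congrFun hc0 i

lemma iota_mem_span {S : Set (Fin d → K)} {x : Fin d → K} (hx : x ∈ span K S) :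
    iota K x ∈ span F (iota K '' S) := by
  induction hx using span_induction with
  | mem y hy => exact subset_span ⟨y, hy, rfl⟩
  | zero => rw [map_zero]; exact zero_mem _
  | add y z _ _ hy hz => rw [map_add]; exact add_mem hy hz
  | smul c y _ hy =>
    rw [map_smul]
    have : (c : F) • iota K y ∈ span F (iota K '' S) := smul_mem _ _ hy
    convert this using 1
    rfl

noncomputable def E (U : Submodule K (Fin d → K)) : Submodule F (Fin d → F) :=
  span F (iota K '' U)

lemma E_mono {U U' : Submodule K (Fin d → K)} (h : U ≤ U') : E K U ≤ E K U' :=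
  span_mono (Set.image_mono h)

lemma E_span (S : Set (Fin d → K)) : E K (span K S) = span F (iota K '' S) := by
  apply le_antisymm
  · rw [E, span_le]
    rintro _ ⟨x, hx, rfl⟩
    exact iota_mem_span K hx
  · exact span_mono (Set.image_mono subset_span)

lemma finrank_E (U : Submodule K (Fin d → K)) : finrank F (E K U) = finrank K U := by
  classical
  set n := finrank K U with hn
  let b := finBasis K U
  let v : Fin n → (Fin d → K) := fun i => (b i : Fin d → K)
  have hv : LinearIndependent K v := b.linearIndependent.map' U.subtype (ker_subtype U)
  have hw : LinearIndependent F (fun i => iota K (v i)) := li_map K hv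
  have hU : span K (Set.range v) = U := by
    have h2 : map U.subtype (span K (Set.range b)) = map U.subtype ⊤ := by rw [b.span_eq]
    rw [Submodule.map_span, Submodule.map_top, Submodule.range_subtype, ← Set.range_comp] at h2
    exact h2
  have hEU : E K U = span F (Set.range fun i => iota K (v i)) := by
    rw [← hU, E_span]
    congr 1
    rw [← Set.range_comp]
    rfl
  rw [hEU, finrank_span_eq_card hw, Fintype.card_fin]

lemma E_sup (U₁ U₂ : Submodule K (Fin d → K)) : E K (U₁ ⊔ U₂) = E K U₁ ⊔ E K U₂ := by
  apply le_antisymm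
  · rw [E, span_le]
    rintro _ ⟨x, hx, rfl⟩
    obtain ⟨y, hy, z, hz, rfl⟩ := mem_sup.mp hx
    rw [map_add]
    exact add_mem (mem_sup_left (subset_span ⟨y, hy, rfl⟩))
      (mem_sup_right (subset_span ⟨z, hz, rfl⟩))
  · exact sup_le (E_mono K le_sup_left) (E_mono K le_sup_right)

lemma E_inf (U₁ U₂ : Submodule K (Fin d → K)) : E K (U₁ ⊓ U₂) = E K U₁ ⊓ E K U₂ := by
  have hle : E K (U₁ ⊓ U₂) ≤ E K U₁ ⊓ E K U₂ :=
    le_inf (E_mono K inf_le_left) (E_mono K inf_le_right)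
  refine Submodule.eq_of_le_of_finrank_le hle ?_
  have h1 := Submodule.finrank_sup_add_finrank_inf_eq (E K U₁) (E K U₂)
  have h2 := Submodule.finrank_sup_add_finrank_inf_eq U₁ U₂
  have h3 : finrank F ↥(E K U₁ ⊔ E K U₂) = finrank K ↥(U₁ ⊔ U₂) := by
    rw [← E_sup, finrank_E]
  rw [finrank_E, finrank_E, h3] at h1
  rw [finrank_E]
  omega

def Rat' (K : Subfield F) (W : Submodule F (Fin d → F)) : Prop :=
  ∃ S : Set (Fin d → F), (∀ v ∈ S, ∀ j, v j ∈ K) ∧ span F S = W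

lemma rat_mono {K K' : Subfield F} (h : K ≤ K') {W : Submodule F (Fin d → F)} (hW : Rat' K W) : Rat' K' W := by
  obtain ⟨S, hS, rfl⟩ := hW; exact ⟨S, fun v hv j => h (hS v hv j), rfl⟩

lemma exists_E {W : Submodule F (Fin d → F)} (hW : Rat' K W) : ∃ U : Submodule K (Fin d → K), E K U = W := by
  obtain ⟨S, hS, rfl⟩ := hW
  refine ⟨span K (iota K ⁻¹' S), ?_⟩
  rw [E_span]
  congr 1
  apply Set.Subset.antisymm (Set.image_preimage_subset _ _)
  intro v hv
  exact ⟨fun j => ⟨v j, hS v hv j⟩, hv, rfl⟩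

lemma rat_E (U : Submodule K (Fin d → K)) : Rat' K (E K U) :=
  ⟨iota K '' U, by rintro _ ⟨x, hx, rfl⟩ j; exact (x j).2, rfl⟩

lemma sublattice : IsSublattice {W : Submodule F (Fin d → F) | Rat' K W} := by
  constructor
  · rintro W₁ ⟨S₁, h₁, rfl⟩ W₂ ⟨S₂, h₂, rfl⟩
    exact ⟨S₁ ∪ S₂, by rintro v (h | h) j; exacts [h₁ v h j, h₂ v h j],
      span_union _ _⟩
  · rintro W₁ hW₁ W₂ hW₂
    obtain ⟨U₁, rfl⟩ := exists_E K hW₁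
    obtain ⟨U₂, rfl⟩ := exists_E K hW₂
    rw [← E_inf]
    exact rat_E K _

lemma single_inj : Function.Injective (fun i => (Pi.single i 1 : Fin d → F)) := by
  classical
  intro i i' h
  by_contra hne
  have h2 := congrFun h i
  beta_reduce at h2
  rw [Pi.single_eq_same, Pi.single_eq_of_ne hne] at h2
  exact one_ne_zero h2

lemma amgm (n d : ℕ) (h : n ≤ d) : n * (d - n) * 4 ≤ d ^ 2 := by
  obtain ⟨k, rfl⟩ := Nat.exists_eq_add_of_le h
  have hk : n + k - n = k := by omega
  rw [hk]
  rcases le_total n k with h2 | h2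
  · obtain ⟨j, rfl⟩ := Nat.exists_eq_add_of_le h2
    nlinarith
  · obtain ⟨j, rfl⟩ := Nat.exists_eq_add_of_le h2
    nlinarith

lemma exists_small (W : Submodule F (Fin d → F)) :
    ∃ H : Finset F, H.card ≤ d ^ 2 / 4 ∧ Rat' (Subfield.closure (H : Set F)) W := by
  classical
  set n := finrank F W with hn
  have hdV : finrank F (Fin d → F) = d := by
    rw [finrank_fintype_fun_eq_card, Fintype.card_fin]
  have hnd : n ≤ d := hdV ▸ W.finrank_le
  -- basis of W
  let b := finBasis F W
  let w : Fin n → (Fin d → F) := fun i => (b i : Fin d → F)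
  have hw : LinearIndependent F w := b.linearIndependent.map' W.subtype (ker_subtype W)
  have hWspan : span F (Set.range w) = W := by
    have h2 : map W.subtype (span F (Set.range b)) = map W.subtype ⊤ := by rw [b.span_eq]
    rw [Submodule.map_span, Submodule.map_top, Submodule.range_subtype, ← Set.range_comp] at h2
    exact h2
  -- standard basis vectors
  let e : Fin d → (Fin d → F) := fun i => Pi.single i 1
  have he : ∀ i j, e i j = if i = j then 1 else 0 := by
    intro i j
    by_cases h : i = j
    · subst h; simp [e]
    · simp [e, Pi.single_eq_of_ne (Ne.symm h), h]
  have hsp : ⊤ ≤ span F (Set.range w ∪ Set.range e) := by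
    intro x _
    rw [pi_eq_sum_univ x]
    refine Submodule.sum_mem _ fun i _ => Submodule.smul_mem _ _ (subset_span ?_)
    refine Set.mem_union_right _ ⟨i, ?_⟩
    funext j
    exact he i j
  have hsr : LinearIndependent F ((↑) : Set.range w → (Fin d → F)) := (linearIndepOn_id_range_iff hw.injective).mpr hw
  let B := Basis.extendLe hsr Set.subset_union_left hsp
  set BS : Set (Fin d → F) := LinearIndepOn.extend (v := id) (s := Set.range w) hsr Set.subset_union_left with hBSdef
  have hBsub : BS ⊆ Set.range w ∪ Set.range e := LinearIndepOn.extend_subset (v := id) (s := Set.range w) hsr _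
  have hwBS : Set.range w ⊆ BS := LinearIndepOn.subset_extend (v := id) (s := Set.range w) hsr _
  haveI : Fintype ↥BS := FiniteDimensional.fintypeBasisIndex B
  have hli : LinearIndependent F ((↑) : BS → (Fin d → F)) := by
    have h := (Basis.extendLe hsr Set.subset_union_left hsp).linearIndependent
    rwa [Basis.coe_extendLe hsr Set.subset_union_left hsp] at h
  have hcardBS : BS.toFinset.card = d := by
    rw [Set.toFinset_card, ← Module.finrank_eq_card_basis B, hdV]
  have hcardw : (Set.range w).toFinset.card = n := by
    rw [Set.toFinset_range, Finset.card_image_of_injective _ hw.injective, Finset.card_univ,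
      Fintype.card_fin]
  -- the complementary coordinates
  let CF : Finset (Fin d → F) := BS.toFinset \ (Set.range w).toFinset
  have hCFsub : ∀ x ∈ CF, x ∈ Set.range e := by
    intro x hx
    rw [Finset.mem_sdiff, Set.mem_toFinset, Set.mem_toFinset] at hx
    rcases hBsub hx.1 with h | h
    · exact absurd h hx.2
    · exact h
  have hCFcard : CF.card = d - n := by
    rw [Finset.card_sdiff_of_subset (Set.toFinset_subset_toFinset.mpr hwBS), hcardBS, hcardw]
  let T : Finset (Fin d) := Finset.univ.filter fun i => e i ∈ CF
  have hCFT : CF = T.image e := by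
    apply Finset.ext
    intro x
    constructor
    · intro hx
      obtain ⟨i, rfl⟩ := hCFsub x hx
      exact Finset.mem_image.mpr ⟨i, Finset.mem_filter.mpr ⟨Finset.mem_univ _, hx⟩, rfl⟩
    · intro hx
      obtain ⟨i, hi, rfl⟩ := Finset.mem_image.mp hx
      exact (Finset.mem_filter.mp hi).2
  have hTcard : T.card = d - n := by
    rw [hCFT, Finset.card_image_of_injective _ single_inj] at hCFcard
    exact hCFcard
  let P : Finset (Fin d) := Tᶜ
  have hPcard : P.card = n := by
    have : T.card ≤ d := hTcard ▸ Nat.sub_le d n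
    rw [Finset.card_compl, Fintype.card_fin, hTcard]
    omega
  -- key: coordinates outside T determine elements of W
  have hdisj : Disjoint (span F (Set.range w)) (span F (CF : Set (Fin d → F))) := by
    have hCFset : (CF : Set (Fin d → F)) = BS \ Set.range w := by
      simp [CF, Finset.coe_sdiff]
    have hpre : Disjoint (((↑) : BS → _) ⁻¹' (Set.range w)) (((↑) : BS → _) ⁻¹' (CF : Set (Fin d → F))) := by
      apply Disjoint.preimage
      rw [hCFset]
      exact disjoint_sdiff_self_right
    have himg := hli.disjoint_span_image hpre
    rwa [Subtype.image_preimage_coe, Subtype.image_preimage_coe,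
      Set.inter_eq_self_of_subset_right hwBS, hCFset,
      Set.inter_eq_self_of_subset_right Set.diff_subset, ← hCFset] at himg
  have hzero : ∀ x, x ∈ W → (∀ i, i ∉ T → x i = 0) → x = 0 := by
    intro x hxW hx
    have hx2 : x ∈ span F (CF : Set (Fin d → F)) := by
      rw [hCFT, Finset.coe_image]
      rw [pi_eq_sum_univ x]
      refine Submodule.sum_mem _ fun i _ => ?_
      by_cases hi : i ∈ T
      · refine Submodule.smul_mem _ _ (subset_span ?_)
        refine ⟨i, hi, ?_⟩
        funext j
        exact he i j
      · rw [hx i hi, zero_smul]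
        exact Submodule.zero_mem _
    have := Submodule.disjoint_def.mp hdisj x (hWspan ▸ hxW) hx2
    exact this
  -- the projection onto coordinates in P, restricted to W
  let φ : W →ₗ[F] (↥P → F) := (LinearMap.funLeft F F ((↑) : ↥P → Fin d)).comp W.subtype
  have hφ : ∀ (z : W) (p : ↥P), φ z p = (z : Fin d → F) ↑p := fun z p => rfl
  have hker0 : LinearMap.ker φ = ⊥ := by
    rw [eq_bot_iff]
    rintro ⟨x, hxW⟩ hx
    rw [LinearMap.mem_ker] at hx
    have hx' : ∀ i, i ∉ T → x i = 0 := by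
      intro i hi
      have hiP : i ∈ P := Finset.mem_compl.mpr hi
      have := congrFun hx (⟨i, hiP⟩ : ↥P)
      exact this
    rw [Submodule.mem_bot]
    exact Subtype.ext (hzero x hxW hx')
  have hinj : Function.Injective φ := LinearMap.ker_eq_bot.mp hker0
  have hfrP : finrank F (↥P → F) = n := by
    rw [finrank_fintype_fun_eq_card, Fintype.card_coe, hPcard]
  have hrange : LinearMap.range φ = ⊤ := by
    apply Submodule.eq_top_of_finrank_eq
    rw [LinearMap.finrank_range_of_inj hinj, hfrP]
  let eqv : W ≃ₗ[F] (↥P → F) := LinearEquiv.ofBijective φ ⟨hinj, LinearMap.range_eq_top.mp hrange⟩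
  let c : ↥P → (Fin d → F) := fun p => ↑(eqv.symm (Pi.single p 1))
  have hc_proj : ∀ (p q : ↥P), c p ↑q = (Pi.single p (1 : F) : ↥P → F) q := by
    intro p q
    have h1 : φ (eqv.symm (Pi.single p (1 : F))) = Pi.single p (1 : F) := by
      have := eqv.apply_symm_apply (Pi.single p (1 : F))
      rwa [show ∀ z, eqv z = φ z from fun z => rfl] at this
    exact congrFun h1 q
  have hspanc : span F (Set.range c) = W := by
    let b' : Basis ↥P F W := (Pi.basisFun F ↥P).map eqv.symm
    have h2 : map W.subtype (span F (Set.range b')) = map W.subtype ⊤ := by rw [b'.span_eq]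
    rw [Submodule.map_span, Submodule.map_top, Submodule.range_subtype, ← Set.range_comp] at h2
    rw [← h2]
    congr 1
    have : (⇑W.subtype ∘ ⇑b') = c := by
      funext p
      simp only [Function.comp_apply, b', Basis.map_apply, Pi.basisFun_apply]
      rfl
    rw [this]
  let H : Finset F := Finset.image (fun q : ↥P × ↥T => c q.1 ↑q.2) Finset.univ
  have hHcard : H.card ≤ n * (d - n) := by
    calc H.card ≤ Fintype.card (↥P × ↥T) := Finset.card_image_le.trans_eq Finset.card_univ
    _ = n * (d - n) := by
      rw [Fintype.card_prod, Fintype.card_coe, Fintype.card_coe, hPcard, hTcard]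
  refine ⟨H, ?_, ?_⟩
  · refine hHcard.trans ?_
    rw [Nat.le_div_iff_mul_le (by norm_num : 0 < 4)]
    exact amgm n d hnd
  · refine ⟨Set.range c, ?_, hspanc⟩
    rintro v ⟨p, rfl⟩ j
    by_cases hj : j ∈ T
    · exact Subfield.subset_closure
        (Finset.mem_coe.mpr (Finset.mem_image.mpr ⟨(p, ⟨j, hj⟩), Finset.mem_univ _, rfl⟩))
    · have hjP : j ∈ P := Finset.mem_compl.mpr hj
      have hcp := hc_proj p ⟨j, hjP⟩
      rw [hcp]
      rcases eq_or_ne (⟨j, hjP⟩ : ↥P) p with h | h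
      · rw [h, Pi.single_eq_same]; exact one_mem _
      · rw [Pi.single_eq_of_ne h]; exact zero_mem _

end Stmt8Aux

/-- If the subspace lattice of `F^d` (`d ≥ 3`) is generated by `m`
elements, then `m · ⌊d²/4⌋` is at least the minimal number of generators of
the field `F`; i.e. `F` has a generating set of size at most `m · ⌊d²/4⌋`. -/
theorem stmt_8 (F : Type*) [Field F] (d : ℕ) (hd : 3 ≤ d) (m : ℕ)
    (g : Fin m → Submodule F (Fin d → F))
    (hgen : latticeClosure (Set.range g) = Set.univ) :
    ∃ H : Finset F, H.card ≤ m * (d ^ 2 / 4) ∧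
      Subfield.closure (H : Set F) = ⊤ := by
  classical
  choose Hs hHs hrat using fun i => Stmt8Aux.exists_small (g i)
  refine ⟨Finset.univ.biUnion Hs, ?_, ?_⟩
  · refine Finset.card_biUnion_le.trans ?_
    calc ∑ i, (Hs i).card ≤ ∑ _i : Fin m, d ^ 2 / 4 := Finset.sum_le_sum fun i _ => hHs i
    _ = m * (d ^ 2 / 4) := by
      rw [Finset.sum_const, Finset.card_univ, Fintype.card_fin, smul_eq_mul]
  set K := Subfield.closure ((Finset.univ.biUnion Hs : Finset F) : Set F) with hK
  have hratK : ∀ i, Stmt8Aux.Rat' K (g i) := by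
    intro i
    refine Stmt8Aux.rat_mono (Subfield.closure_mono ?_) (hrat i)
    exact_mod_cast Finset.coe_subset.mpr (Finset.subset_biUnion_of_mem Hs (Finset.mem_univ i))
  have hall : ∀ W : Submodule F (Fin d → F), Stmt8Aux.Rat' K W := by
    intro W
    have hsub : latticeClosure (Set.range g) ⊆ {W | Stmt8Aux.Rat' K W} :=
      latticeClosure_min (by rintro _ ⟨i, rfl⟩; exact hratK i) (Stmt8Aux.sublattice K)
    exact hsub (by rw [hgen]; trivial)
  rw [eq_top_iff]
  intro a _
  let va : Fin d → F := fun j =>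
    if j = ⟨0, by omega⟩ then 1 else if j = ⟨1, by omega⟩ then a else 0
  obtain ⟨S, hS, hspan⟩ := hall (span F {va})
  have hva : va ≠ 0 := by
    intro h
    have := congrFun h ⟨0, by omega⟩
    simp [va] at this
  have hex : ∃ s ∈ S, s ≠ 0 := by
    by_contra h
    push_neg at h
    have hle : span F S ≤ ⊥ := by
      rw [span_le]
      intro s hs
      rw [SetLike.mem_coe, Submodule.mem_bot]
      exact h s hs
    rw [hspan] at hle
    exact hva (Submodule.mem_bot F |>.mp (hle (subset_span rfl)))
  obtain ⟨s, hsS, hs0⟩ := hex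
  have hsmem : s ∈ span F {va} := hspan ▸ subset_span hsS
  rw [mem_span_singleton] at hsmem
  obtain ⟨cc, rfl⟩ := hsmem
  have hcc : cc ≠ 0 := by rintro rfl; simp at hs0
  have e0 : cc ∈ K := by
    have := hS _ hsS ⟨0, by omega⟩
    simpa [va] using this
  have e1 : cc * a ∈ K := by
    have := hS _ hsS ⟨1, by omega⟩
    simpa [va] using this
  have ha : a = cc⁻¹ * (cc * a) := by field_simp
  rw [ha]
  exact K.mul_mem (K.inv_mem e0) e1
end

section
/- Let F be a field with more than two elements and let d = 3. In the projective plane over F, if (g_1, g_2, g_3, g_4) is a quadruple of points and lines in general position with three of the g_i points and one a line (type (3,1)), then there exists a complete quadrangle (p_1, p_2, p_3, p_4) (four points in general position) with p_i ≤ g_i for all i. -/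
open Module Submodule

section Helpers
variable {F : Type*} [Field F]

lemma solve2 {a b d e x y : F} (h1 : x * a + y * b = 0) (h2 : x * d + y * e = 0)
    (hdet : a * e - b * d ≠ 0) : x = 0 ∧ y = 0 := by
  constructor
  · have h : x * (a * e - b * d) = 0 := by linear_combination e * h1 - b * h2
    rcases mul_eq_zero.mp h with h | h
    · exact h
    · exact absurd h hdet
  · have h : y * (a * e - b * d) = 0 := by linear_combination -d * h1 + a * h2
    rcases mul_eq_zero.mp h with h | h
    · exact h
    · exact absurd h hdet

lemma oneEq {x y : Submodule F (Fin 3 → F)} (hle : x ≤ y)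
    (hx : finrank F x = 1) (hy : finrank F y = 1) : x = y := by
  have : FiniteDimensional F y := Module.finite_of_finrank_eq_succ hy
  exact Submodule.eq_of_le_of_finrank_le hle (by omega)

lemma supLe2 {x y : Submodule F (Fin 3 → F)}
    (hx : finrank F x = 1) (hy : finrank F y = 1) : finrank F ↥(x ⊔ y) ≤ 2 := by
  have : FiniteDimensional F x := Module.finite_of_finrank_eq_succ hx
  have : FiniteDimensional F y := Module.finite_of_finrank_eq_succ hy
  have h := Submodule.finrank_sup_add_finrank_inf_eq x y
  omega

lemma rank2 {x y : Submodule F (Fin 3 → F)}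
    (hx : finrank F x = 1) (hy : finrank F y = 1) (hxy : x ≠ y) :
    finrank F ↥(x ⊔ y) = 2 := by
  have : FiniteDimensional F ↥(x ⊔ y) := by
    have : FiniteDimensional F (Fin 3 → F) := inferInstance
    infer_instance
  have hlt : x < x ⊔ y := by
    rcases lt_or_eq_of_le (le_sup_left : x ≤ x ⊔ y) with h | h
    · exact h
    · exact absurd (oneEq (h ▸ le_sup_right : y ≤ x) hy hx).symm hxy
  have := Submodule.finrank_lt_finrank_of_lt hlt
  have h2 := supLe2 hx hy
  omega

lemma SYM {x y z : Submodule F (Fin 3 → F)}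
    (hx : finrank F x = 1) (hy : finrank F y = 1) (hz : finrank F z = 1)
    (hxz : x ≠ z) (hyz : y ≠ z) (h : x ≤ y ⊔ z) : y ≤ x ⊔ z := by
  have h2 : finrank F ↥(y ⊔ z) = 2 := rank2 hy hz hyz
  have h2' : finrank F ↥(x ⊔ z) = 2 := rank2 hx hz hxz
  have hle : x ⊔ z ≤ y ⊔ z := sup_le h le_sup_right
  have : FiniteDimensional F ↥(y ⊔ z) := by infer_instance
  have heq : x ⊔ z = y ⊔ z := Submodule.eq_of_le_of_finrank_le hle (by omega)
  rw [heq]; exact le_sup_left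

lemma exists_good (F : Type*) [Field F] (hF : (3 : Cardinal) ≤ Cardinal.mk F)
    (V : Submodule F (Fin 3 → F)) (hV : finrank F V = 2)
    (W : Fin 3 → Submodule F (Fin 3 → F)) (hW : ∀ k, ¬ V ≤ W k) :
    ∃ v : Fin 3 → F, v ∈ V ∧ v ≠ 0 ∧ ∀ k, v ∉ W k := by
  obtain ⟨c, hc0, hc1⟩ := Cardinal.three_le hF 0 1
  have : FiniteDimensional F V := Module.finite_of_finrank_eq_succ hV
  let b : Basis (Fin 2) F V := Module.finBasisOfFinrankEq F V hV
  set A : Fin 4 → Fin 2 → F := ![![1,0],![0,1],![1,1],![1,c]] with hA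
  set u : Fin 4 → V := fun m => A m 0 • b 0 + A m 1 • b 1 with hu
  have key : ∀ m m', m ≠ m' → ∀ x y : F, x • u m + y • u m' = 0 → x = 0 ∧ y = 0 := by
    intro m m' hmm x y hxy
    have h2 : ∑ i : Fin 2, (x * A m i + y * A m' i) • b i = 0 := by
      rw [Fin.sum_univ_two, ← hxy, hu]
      simp only
      module
    have h3 := Fintype.linearIndependent_iff.mp b.linearIndependent _ h2
    have h30 := h3 0
    have h31 := h3 1
    clear h2 h3 hxy
    fin_cases m <;> fin_cases m'
    · exact absurd rfl hmm
    · exact solve2 (show x*1+y*0=0 from h30) (show x*0+y*1=0 from h31) (by norm_num)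
    · exact solve2 (show x*1+y*1=0 from h30) (show x*0+y*1=0 from h31) (by norm_num)
    · exact solve2 (show x*1+y*1=0 from h30) (show x*0+y*c=0 from h31) (by simpa using hc0)
    · exact solve2 (show x*0+y*1=0 from h30) (show x*1+y*0=0 from h31) (by norm_num)
    · exact absurd rfl hmm
    · exact solve2 (show x*0+y*1=0 from h30) (show x*1+y*1=0 from h31) (by norm_num)
    · exact solve2 (show x*0+y*1=0 from h30) (show x*1+y*c=0 from h31) (by norm_num)
    · exact solve2 (show x*1+y*1=0 from h30) (show x*1+y*0=0 from h31) (by norm_num)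
    · exact solve2 (show x*1+y*0=0 from h30) (show x*1+y*1=0 from h31) (by norm_num)
    · exact absurd rfl hmm
    · exact solve2 (show x*1+y*1=0 from h30) (show x*1+y*c=0 from h31)
        (by simpa [sub_ne_zero] using hc1)
    · exact solve2 (show x*1+y*1=0 from h30) (show x*c+y*0=0 from h31) (by simpa using hc0)
    · exact solve2 (show x*1+y*0=0 from h30) (show x*c+y*1=0 from h31) (by norm_num)
    · exact solve2 (show x*1+y*1=0 from h30) (show x*c+y*1=0 from h31)
        (by simpa [sub_ne_zero] using Ne.symm hc1)
    · exact absurd rfl hmm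
  by_contra hcon
  push_neg at hcon
  have hu0 : ∀ m, u m ≠ 0 := by
    intro m h
    have := (key m (m + 1) (by fin_cases m <;> decide) 1 0 (by simp [h])).1
    exact one_ne_zero this
  have hex : ∀ m : Fin 4, ∃ k, (u m : Fin 3 → F) ∈ W k := by
    intro m
    exact hcon (u m) (u m).2 (by simpa using hu0 m)
  choose f hf using hex
  obtain ⟨m, m', hne, hfe⟩ := Fintype.exists_ne_map_eq_of_card_lt f (by simp)
  have hind : LinearIndependent F ![u m, u m'] := by
    rw [LinearIndependent.pair_iff]
    exact fun x y hxy => key m m' hne x y hxy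
  have hsp : finrank F (span F (Set.range ![u m, u m']) : Submodule F V) = 2 := by
    rw [finrank_span_eq_card hind]; simp
  set P : Submodule F V := (W (f m)).comap V.subtype with hP
  have hle : span F (Set.range ![u m, u m']) ≤ P := by
    rw [Submodule.span_le]
    rintro z ⟨i, rfl⟩
    fin_cases i
    · exact hf m
    · show (u m' : Fin 3 → F) ∈ W (f m)
      rw [hfe]; exact hf m'
  have hP2 : finrank F P = 2 := by
    have h1 : finrank F P ≤ 2 := hV ▸ P.finrank_le
    have h2 : 2 ≤ finrank F P := hsp ▸ Submodule.finrank_mono hle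
    omega
  have hPt : P = ⊤ := Submodule.eq_top_of_finrank_eq (by rw [hP2, hV])
  apply hW (f m)
  intro z hz
  have : (⟨z, hz⟩ : V) ∈ P := hPt ▸ Submodule.mem_top
  exact this

end Helpers


/-- A quadruple of points/lines (1- and 2-dimensional subspaces of `F³`) is in
general position: it is an antichain, no three points among its components are
collinear, and no three lines among its components are concurrent. -/
def GeneralPosition {F : Type*} [Field F]
    (g : Fin 4 → Submodule F (Fin 3 → F)) : Prop :=
  (∀ i j, i ≠ j → ¬ g i ≤ g j) ∧
  (∀ i j k, i ≠ j → j ≠ k → i ≠ k →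
    Module.finrank F (g i) = 1 → Module.finrank F (g j) = 1 →
    Module.finrank F (g k) = 1 → ¬ g i ≤ g j ⊔ g k) ∧
  (∀ i j k, i ≠ j → j ≠ k → i ≠ k →
    Module.finrank F (g i) = 2 → Module.finrank F (g j) = 2 →
    Module.finrank F (g k) = 2 → ¬ g i ⊓ g j ≤ g k)

/-- Over a field with more than two elements, a quadruple in
general position of type (3,1) (three points and one line) dominates a complete
quadrangle: there are four points in general position with `p i ≤ g i`. -/
theorem stmt_10 (F : Type*) [Field F] (hF : (3 : Cardinal) ≤ Cardinal.mk F)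
    (g : Fin 4 → Submodule F (Fin 3 → F)) (hgp : GeneralPosition g)
    (htype : ∃ l : Fin 4, Module.finrank F (g l) = 2 ∧
      ∀ i, i ≠ l → Module.finrank F (g i) = 1) :
    ∃ p : Fin 4 → Submodule F (Fin 3 → F),
      (∀ i, Module.finrank F (p i) = 1) ∧ GeneralPosition p ∧
      ∀ i, p i ≤ g i := by
  obtain ⟨l, hl2, hl1⟩ := htype
  obtain ⟨han, hcol, -⟩ := hgp
  set e : Fin 3 → Fin 4 := fun m => l + m.succ with he
  have fact1 : ∀ m, e m ≠ l := by
    have : ∀ (l : Fin 4) (m : Fin 3), l + m.succ ≠ l := by decide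
    exact fun m => this l m
  have fact2 : ∀ i, i ≠ l → ∃ m, e m = i := by
    have : ∀ (l i : Fin 4), i ≠ l → ∃ m : Fin 3, l + m.succ = i := by decide
    exact this l
  have fact5 : Function.Injective e := by
    have : ∀ (l : Fin 4), Function.Injective (fun m : Fin 3 => l + m.succ) := by decide
    exact this l
  set W : Fin 3 → Submodule F (Fin 3 → F) := fun k => g (e (k+1)) ⊔ g (e (k+2)) with hWdef
  have fact4 : ∀ k : Fin 3, (k : Fin 3) + 1 ≠ k + 2 := by decide
  have hWne : ∀ k, ¬ g l ≤ W k := by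
    intro k hle
    have h1 : finrank F (g (e (k+1))) = 1 := hl1 _ (fact1 _)
    have h2 : finrank F (g (e (k+2))) = 1 := hl1 _ (fact1 _)
    have hWr : finrank F ↥(W k) ≤ 2 := supLe2 h1 h2
    have : FiniteDimensional F ↥(W k) := by infer_instance
    have heq : g l = W k := Submodule.eq_of_le_of_finrank_le hle (by omega)
    exact han (e (k+1)) l (fact1 _) (heq ▸ (le_sup_left : g (e (k+1)) ≤ W k))
  obtain ⟨v, hvV, hv0, hvW⟩ := exists_good F hF (g l) hl2 W hWne
  set p : Fin 4 → Submodule F (Fin 3 → F) := Function.update g l (Submodule.span F {v}) with hp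
  have hpl : p l = Submodule.span F {v} := Function.update_self l _ g
  have hpo : ∀ i, i ≠ l → p i = g i := fun i hi => Function.update_of_ne hi _ g
  have hp1 : ∀ i, finrank F (p i) = 1 := by
    intro i
    by_cases hi : i = l
    · rw [hi, hpl]; exact finrank_span_singleton hv0
    · rw [hpo i hi]; exact hl1 i hi
  -- every point index ≠ l lies below some W k
  have hgiW : ∀ i, i ≠ l → ∃ k, g i ≤ W k := by
    intro i hi
    obtain ⟨m, hm⟩ := fact2 i hi
    refine ⟨m + 2, ?_⟩
    have h1 : (m + 2 : Fin 3) + 1 = m := by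
      have : ∀ m : Fin 3, (m + 2 : Fin 3) + 1 = m := by decide
      exact this m
    rw [hWdef]
    simp only [h1, hm]
    exact le_sup_left
  -- span v is not below any line through two of the points
  have hvnotin : ∀ a b : Fin 4, a ≠ l → b ≠ l → a ≠ b → ¬ Submodule.span F {v} ≤ g a ⊔ g b := by
    intro a b ha hb hab hle
    obtain ⟨m, hm⟩ := fact2 a ha
    obtain ⟨m', hm'⟩ := fact2 b hb
    have hmm : m ≠ m' := fun h => hab (hm ▸ hm' ▸ h ▸ rfl)
    have fact3 : ∀ (m m' : Fin 3), m ≠ m' →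
        ∃ k : Fin 3, (k+1 = m ∧ k+2 = m') ∨ (k+1 = m' ∧ k+2 = m) := by decide
    obtain ⟨k, hk | hk⟩ := fact3 m m' hmm
    · apply hvW k
      have : W k = g a ⊔ g b := by rw [hWdef]; simp only [hk.1, hk.2, hm, hm']
      rw [this]
      exact hle (Submodule.mem_span_singleton_self v)
    · apply hvW k
      have : W k = g b ⊔ g a := by rw [hWdef]; simp only [hk.1, hk.2, hm, hm']
      rw [this, sup_comm]
      exact hle (Submodule.mem_span_singleton_self v)
  have hplne : ∀ i, i ≠ l → p l ≠ p i := by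
    intro i hi hEq
    obtain ⟨k, hk⟩ := hgiW i hi
    apply hvW k
    apply hk
    rw [← hpo i hi, ← hEq, hpl]
    exact Submodule.mem_span_singleton_self v
  have hpne : ∀ i j, i ≠ j → p i ≠ p j := by
    intro i j hij hEq
    by_cases hi : i = l
    · exact hplne j (fun h => hij (hi ▸ h ▸ rfl)) (hi ▸ hEq)
    · by_cases hj : j = l
      · exact hplne i (fun h => hij (h ▸ hj ▸ rfl)) (hj ▸ hEq.symm)
      · rw [hpo i hi, hpo j hj] at hEq
        exact han i j hij (le_of_eq hEq)
  refine ⟨p, hp1, ⟨?_, ?_, ?_⟩, ?_⟩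
  · -- antichain
    intro i j hij hle
    exact hpne i j hij (oneEq hle (hp1 i) (hp1 j))
  · -- no three collinear
    intro i j k hij hjk hik _ _ _ hle
    by_cases hi : i = l
    · subst hi
      have hj : j ≠ i := Ne.symm hij
      have hk : k ≠ i := Ne.symm hik
      rw [hpl, hpo j hj, hpo k hk] at hle
      exact hvnotin j k hj hk hjk hle
    · by_cases hj : j = l
      · subst hj
        have hk : k ≠ j := Ne.symm hjk
        have hle' : p j ≤ p i ⊔ p k :=
          SYM (hp1 i) (hp1 j) (hp1 k) (hpne i k hik) (hpne j k hjk) hle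
        rw [hpl, hpo i hi, hpo k hk] at hle'
        exact hvnotin i k hi hk hik hle'
      · by_cases hk : k = l
        · subst hk
          rw [sup_comm] at hle
          have hle' : p k ≤ p i ⊔ p j :=
            SYM (hp1 i) (hp1 k) (hp1 j) (hpne i j hij) (hpne k j (Ne.symm hjk)) hle
          rw [hpl, hpo i hi, hpo j hj] at hle'
          exact hvnotin i j hi hj hij hle'
        · rw [hpo i hi, hpo j hj, hpo k hk] at hle
          exact hcol i j k hij hjk hik (hl1 i hi) (hl1 j hj) (hl1 k hk) hle
  · -- no three concurrent (vacuous)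
    intro i j k _ _ _ h2 _ _
    rw [hp1 i] at h2
    omega
  · -- p i ≤ g i
    intro i
    by_cases hi : i = l
    · rw [hi, hpl]
      exact (Submodule.span_singleton_le_iff_mem v _).mpr hvV
    · rw [hpo i hi]
end

section
/- Let F be a prime field (F = Q or F = Z/p for a prime p), let L be the lattice of subspaces of F³, and let p_1 = F·(1,0,0), p_2 = F·(0,1,0), p_3 = F·(0,0,1), p_4 = F·(1,1,1) be four one-dimensional subspaces. Then {p_1, p_2, p_3, p_4} generates L. -/
open Submodule

section Aux

variable {F : Type*} [Field F]

private lemma veta (v : Fin 3 → F) : v = ![v 0, v 1, v 2] := by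
  funext i; fin_cases i <;> rfl

private lemma sspan {c : F} (hc : c ≠ 0) {v w : Fin 3 → F} (h : v = c • w) :
    span F {v} = span F {w} := by
  subst h
  exact Submodule.span_singleton_smul_eq (IsUnit.mk0 c hc) w

private lemma jn (v w : Fin 3 → F) :
    span F {v} ⊔ span F {w} = span F {v, w} := by
  rw [← Submodule.span_union, Set.singleton_union]

private lemma lemA :
    span F {(![1,0,0] : Fin 3 → F)} ⊓ span F {(![0,1,0] : Fin 3 → F)} = ⊥ := by
  rw [eq_bot_iff]
  rintro z ⟨h1, h2⟩
  rw [SetLike.mem_coe, mem_span_singleton] at h1 h2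
  obtain ⟨a, rfl⟩ := h1
  obtain ⟨b, hb⟩ := h2
  have e0 := congr_fun hb 0
  simp at e0
  simp [← e0]

private lemma lemC :
    (span F {(![1,0,0] : Fin 3 → F)} ⊔ span F {(![0,1,0] : Fin 3 → F)}) ⊓
      (span F {(![0,0,1] : Fin 3 → F)} ⊔ span F {(![1,1,1] : Fin 3 → F)}) =
      span F {(![1,1,0] : Fin 3 → F)} := by
  rw [jn, jn]
  refine le_antisymm ?_ (span_le.2 ?_)
  · rintro z ⟨h1, h2⟩
    rw [SetLike.mem_coe, mem_span_pair] at h1 h2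
    obtain ⟨c1, c2, rfl⟩ := h1
    obtain ⟨d1, d2, h⟩ := h2
    have e0 := congr_fun h 0
    have e1 := congr_fun h 1
    have e2 := congr_fun h 2
    simp at e0 e1 e2
    rw [mem_span_singleton]
    refine ⟨c1, ?_⟩
    funext i
    fin_cases i <;> simp <;> linear_combination e1 - e0
  · simp only [Set.singleton_subset_iff, SetLike.mem_coe, mem_inf]
    refine ⟨mem_span_pair.2 ⟨1, 1, ?_⟩, mem_span_pair.2 ⟨-1, 1, ?_⟩⟩ <;>
      (funext i; fin_cases i <;> simp)

private lemma lemD :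
    (span F {(![0,1,0] : Fin 3 → F)} ⊔ span F {(![0,0,1] : Fin 3 → F)}) ⊓
      (span F {(![1,0,0] : Fin 3 → F)} ⊔ span F {(![1,1,1] : Fin 3 → F)}) =
      span F {(![0,1,1] : Fin 3 → F)} := by
  rw [jn, jn]
  refine le_antisymm ?_ (span_le.2 ?_)
  · rintro z ⟨h1, h2⟩
    rw [SetLike.mem_coe, mem_span_pair] at h1 h2
    obtain ⟨c1, c2, rfl⟩ := h1
    obtain ⟨d1, d2, h⟩ := h2
    have e0 := congr_fun h 0
    have e1 := congr_fun h 1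
    have e2 := congr_fun h 2
    simp at e0 e1 e2
    rw [mem_span_singleton]
    refine ⟨c1, ?_⟩
    funext i
    fin_cases i <;> simp <;> linear_combination e2 - e1
  · simp only [Set.singleton_subset_iff, SetLike.mem_coe, mem_inf]
    refine ⟨mem_span_pair.2 ⟨1, 1, ?_⟩, mem_span_pair.2 ⟨-1, 1, ?_⟩⟩ <;>
      (funext i; fin_cases i <;> simp)

private lemma lemE (t : F) :
    (span F {(![1,t,0] : Fin 3 → F)} ⊔ span F {(![0,0,1] : Fin 3 → F)}) ⊓
      (span F {(![1,0,0] : Fin 3 → F)} ⊔ span F {(![0,1,1] : Fin 3 → F)}) =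
      span F {(![1,t,t] : Fin 3 → F)} := by
  rw [jn, jn]
  refine le_antisymm ?_ (span_le.2 ?_)
  · rintro z ⟨h1, h2⟩
    rw [SetLike.mem_coe, mem_span_pair] at h1 h2
    obtain ⟨c1, c2, rfl⟩ := h1
    obtain ⟨d1, d2, h⟩ := h2
    have e0 := congr_fun h 0
    have e1 := congr_fun h 1
    have e2 := congr_fun h 2
    simp at e0 e1 e2
    rw [mem_span_singleton]
    refine ⟨c1, ?_⟩
    funext i
    fin_cases i <;> simp <;> linear_combination e2 - e1
  · simp only [Set.singleton_subset_iff, SetLike.mem_coe, mem_inf]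
    refine ⟨mem_span_pair.2 ⟨1, t, ?_⟩, mem_span_pair.2 ⟨1, t, ?_⟩⟩ <;>
      (funext i; fin_cases i <;> simp)

private lemma lemF (t : F) :
    (span F {(![1,t,t] : Fin 3 → F)} ⊔ span F {(![0,1,0] : Fin 3 → F)}) ⊓
      (span F {(![1,0,0] : Fin 3 → F)} ⊔ span F {(![0,0,1] : Fin 3 → F)}) =
      span F {(![1,0,t] : Fin 3 → F)} := by
  rw [jn, jn]
  refine le_antisymm ?_ (span_le.2 ?_)
  · rintro z ⟨h1, h2⟩
    rw [SetLike.mem_coe, mem_span_pair] at h1 h2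
    obtain ⟨c1, c2, rfl⟩ := h1
    obtain ⟨d1, d2, h⟩ := h2
    have e0 := congr_fun h 0
    have e1 := congr_fun h 1
    have e2 := congr_fun h 2
    simp at e0 e1 e2
    rw [mem_span_singleton]
    refine ⟨c1, ?_⟩
    funext i
    fin_cases i <;> simp <;> linear_combination e1
  · simp only [Set.singleton_subset_iff, SetLike.mem_coe, mem_inf]
    refine ⟨mem_span_pair.2 ⟨1, -t, ?_⟩, mem_span_pair.2 ⟨1, t, ?_⟩⟩ <;>
      (funext i; fin_cases i <;> simp)

private lemma lemG (a b : F) :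
    (span F {(![1,a,0] : Fin 3 → F)} ⊔ span F {(![0,0,1] : Fin 3 → F)}) ⊓
      (span F {(![1,0,b] : Fin 3 → F)} ⊔ span F {(![0,1,0] : Fin 3 → F)}) =
      span F {(![1,a,b] : Fin 3 → F)} := by
  rw [jn, jn]
  refine le_antisymm ?_ (span_le.2 ?_)
  · rintro z ⟨h1, h2⟩
    rw [SetLike.mem_coe, mem_span_pair] at h1 h2
    obtain ⟨c1, c2, rfl⟩ := h1
    obtain ⟨d1, d2, h⟩ := h2
    have e0 := congr_fun h 0
    have e1 := congr_fun h 1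
    have e2 := congr_fun h 2
    simp at e0 e1 e2
    rw [mem_span_singleton]
    refine ⟨c1, ?_⟩
    funext i
    fin_cases i <;> simp <;> linear_combination e2 - b * e0
  · simp only [Set.singleton_subset_iff, SetLike.mem_coe, mem_inf]
    refine ⟨mem_span_pair.2 ⟨1, b, ?_⟩, mem_span_pair.2 ⟨1, a, ?_⟩⟩ <;>
      (funext i; fin_cases i <;> simp)

private lemma lemH (a b : F) :
    (span F {(![1,a,b] : Fin 3 → F)} ⊔ span F {(![0,1,1] : Fin 3 → F)}) ⊓
      (span F {(![1,0,0] : Fin 3 → F)} ⊔ span F {(![0,1,0] : Fin 3 → F)}) =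
      span F {(![1,a-b,0] : Fin 3 → F)} := by
  rw [jn, jn]
  refine le_antisymm ?_ (span_le.2 ?_)
  · rintro z ⟨h1, h2⟩
    rw [SetLike.mem_coe, mem_span_pair] at h1 h2
    obtain ⟨c1, c2, rfl⟩ := h1
    obtain ⟨d1, d2, h⟩ := h2
    have e0 := congr_fun h 0
    have e1 := congr_fun h 1
    have e2 := congr_fun h 2
    simp at e0 e1 e2
    rw [mem_span_singleton]
    refine ⟨c1, ?_⟩
    funext i
    fin_cases i <;> simp <;> linear_combination e2
  · simp only [Set.singleton_subset_iff, SetLike.mem_coe, mem_inf]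
    refine ⟨mem_span_pair.2 ⟨1, -b, ?_⟩, mem_span_pair.2 ⟨1, a - b, ?_⟩⟩ <;>
      (funext i; fin_cases i <;> simp) <;> ring

private lemma lemI (a b : F) :
    (span F {(![1,a,0] : Fin 3 → F)} ⊔ span F {(![1,0,b] : Fin 3 → F)}) ⊓
      (span F {(![0,1,0] : Fin 3 → F)} ⊔ span F {(![0,0,1] : Fin 3 → F)}) =
      span F {(![0,a,-b] : Fin 3 → F)} := by
  rw [jn, jn]
  refine le_antisymm ?_ (span_le.2 ?_)
  · rintro z ⟨h1, h2⟩
    rw [SetLike.mem_coe, mem_span_pair] at h1 h2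
    obtain ⟨c1, c2, rfl⟩ := h1
    obtain ⟨d1, d2, h⟩ := h2
    have e0 := congr_fun h 0
    have e1 := congr_fun h 1
    have e2 := congr_fun h 2
    simp at e0 e1 e2
    rw [mem_span_singleton]
    refine ⟨c1, ?_⟩
    funext i
    fin_cases i
    · simp; linear_combination e0
    · simp
    · simp; linear_combination b * e0
  · simp only [Set.singleton_subset_iff, SetLike.mem_coe, mem_inf]
    refine ⟨mem_span_pair.2 ⟨1, -1, ?_⟩, mem_span_pair.2 ⟨a, -b, ?_⟩⟩ <;>
      (funext i; fin_cases i <;> simp)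

private lemma lemJ (a b : F) :
    (span F {(![1,a,a] : Fin 3 → F)} ⊔ span F {(![0,1,0] : Fin 3 → F)}) ⊓
      (span F {(![1,0,0] : Fin 3 → F)} ⊔ span F {(![0,b,1] : Fin 3 → F)}) =
      span F {(![1,a*b,a] : Fin 3 → F)} := by
  rw [jn, jn]
  refine le_antisymm ?_ (span_le.2 ?_)
  · rintro z ⟨h1, h2⟩
    rw [SetLike.mem_coe, mem_span_pair] at h1 h2
    obtain ⟨c1, c2, rfl⟩ := h1
    obtain ⟨d1, d2, h⟩ := h2
    have e0 := congr_fun h 0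
    have e1 := congr_fun h 1
    have e2 := congr_fun h 2
    simp at e0 e1 e2
    rw [mem_span_singleton]
    refine ⟨c1, ?_⟩
    funext i
    fin_cases i <;> simp <;> linear_combination e1 - b * e2
  · simp only [Set.singleton_subset_iff, SetLike.mem_coe, mem_inf]
    refine ⟨mem_span_pair.2 ⟨1, a*b - a, ?_⟩, mem_span_pair.2 ⟨1, a, ?_⟩⟩ <;>
      (funext i; fin_cases i <;> simp) <;> ring

private lemma lemK (a b : F) :
    (span F {(![1,a,b] : Fin 3 → F)} ⊔ span F {(![0,0,1] : Fin 3 → F)}) ⊓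
      (span F {(![1,0,0] : Fin 3 → F)} ⊔ span F {(![0,1,0] : Fin 3 → F)}) =
      span F {(![1,a,0] : Fin 3 → F)} := by
  rw [jn, jn]
  refine le_antisymm ?_ (span_le.2 ?_)
  · rintro z ⟨h1, h2⟩
    rw [SetLike.mem_coe, mem_span_pair] at h1 h2
    obtain ⟨c1, c2, rfl⟩ := h1
    obtain ⟨d1, d2, h⟩ := h2
    have e0 := congr_fun h 0
    have e1 := congr_fun h 1
    have e2 := congr_fun h 2
    simp at e0 e1 e2
    rw [mem_span_singleton]
    refine ⟨c1, ?_⟩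
    funext i
    fin_cases i <;> simp <;> linear_combination e2
  · simp only [Set.singleton_subset_iff, SetLike.mem_coe, mem_inf]
    refine ⟨mem_span_pair.2 ⟨1, -b, ?_⟩, mem_span_pair.2 ⟨1, a, ?_⟩⟩ <;>
      (funext i; fin_cases i <;> simp)

private lemma lemL (c : F) :
    (span F {(![0,1,c] : Fin 3 → F)} ⊔ span F {(![1,0,0] : Fin 3 → F)}) ⊓
      (span F {(![0,0,1] : Fin 3 → F)} ⊔ span F {(![1,1,0] : Fin 3 → F)}) =
      span F {(![1,1,c] : Fin 3 → F)} := by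
  rw [jn, jn]
  refine le_antisymm ?_ (span_le.2 ?_)
  · rintro z ⟨h1, h2⟩
    rw [SetLike.mem_coe, mem_span_pair] at h1 h2
    obtain ⟨c1, c2, rfl⟩ := h1
    obtain ⟨d1, d2, h⟩ := h2
    have e0 := congr_fun h 0
    have e1 := congr_fun h 1
    have e2 := congr_fun h 2
    simp at e0 e1 e2
    rw [mem_span_singleton]
    refine ⟨c1, ?_⟩
    funext i
    fin_cases i <;> simp <;> linear_combination e0 - e1
  · simp only [Set.singleton_subset_iff, SetLike.mem_coe, mem_inf]
    refine ⟨mem_span_pair.2 ⟨1, 1, ?_⟩, mem_span_pair.2 ⟨c, 1, ?_⟩⟩ <;>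
      (funext i; fin_cases i <;> simp)

private lemma lemM (a b : F) (hb : b ≠ 0) :
    (span F {(![a,b,0] : Fin 3 → F)} ⊔ span F {(![0,0,1] : Fin 3 → F)}) ⊓
      (span F {(![1,0,0] : Fin 3 → F)} ⊔ span F {(![0,b,1] : Fin 3 → F)}) =
      span F {(![a,b,1] : Fin 3 → F)} := by
  rw [jn, jn]
  refine le_antisymm ?_ (span_le.2 ?_)
  · rintro z ⟨h1, h2⟩
    rw [SetLike.mem_coe, mem_span_pair] at h1 h2
    obtain ⟨c1, c2, rfl⟩ := h1
    obtain ⟨d1, d2, h⟩ := h2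
    have e0 := congr_fun h 0
    have e1 := congr_fun h 1
    have e2 := congr_fun h 2
    simp at e0 e1 e2
    rw [mem_span_singleton]
    refine ⟨c1, ?_⟩
    have hd2 : d2 = c1 := e1.resolve_right hb
    funext i
    fin_cases i <;> simp <;> linear_combination e2 - hd2
  · simp only [Set.singleton_subset_iff, SetLike.mem_coe, mem_inf]
    refine ⟨mem_span_pair.2 ⟨1, 1, ?_⟩, mem_span_pair.2 ⟨a, 1, ?_⟩⟩ <;>
      (funext i; fin_cases i <;> simp)

end Aux

private lemma key {F : Type*} [Field F] (hprime : ∀ K : Subfield F, K = ⊤)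
    (S : Set (Submodule F (Fin 3 → F)))
    (hsup : SupClosed S) (hinf : InfClosed S)
    (hp1 : span F {(![1,0,0] : Fin 3 → F)} ∈ S)
    (hp2 : span F {(![0,1,0] : Fin 3 → F)} ∈ S)
    (hp3 : span F {(![0,0,1] : Fin 3 → F)} ∈ S)
    (hp4 : span F {(![1,1,1] : Fin 3 → F)} ∈ S) :
    ∀ W : Submodule F (Fin 3 → F), W ∈ S := by
  have hbot : (⊥ : Submodule F (Fin 3 → F)) ∈ S := by
    have := hinf hp1 hp2; rwa [lemA] at this
  have hp12 : span F {(![1,1,0] : Fin 3 → F)} ∈ S := by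
    have := hinf (hsup hp1 hp2) (hsup hp3 hp4); rwa [lemC] at this
  have hd23 : span F {(![0,1,1] : Fin 3 → F)} ∈ S := by
    have := hinf (hsup hp2 hp3) (hsup hp1 hp4); rwa [lemD] at this
  -- the coordinate set
  set T : Set F := {t : F | span F {(![1,t,0] : Fin 3 → F)} ∈ S} with hTdef
  have h0T : (0 : F) ∈ T := hp1
  have h1T : (1 : F) ∈ T := hp12
  have hdiag : ∀ t ∈ T, span F {(![1,t,t] : Fin 3 → F)} ∈ S := fun t ht => by
    have := hinf (hsup ht hp3) (hsup hp1 hd23); rwa [lemE] at this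
  have hsv : ∀ t ∈ T, span F {(![1,0,t] : Fin 3 → F)} ∈ S := fun t ht => by
    have := hinf (hsup (hdiag t ht) hp2) (hsup hp1 hp3); rwa [lemF] at this
  have hw : ∀ a ∈ T, ∀ b ∈ T, span F {(![1,a,b] : Fin 3 → F)} ∈ S := fun a ha b hb => by
    have := hinf (hsup ha hp3) (hsup (hsv b hb) hp2); rwa [lemG] at this
  have hsub : ∀ a ∈ T, ∀ b ∈ T, a - b ∈ T := fun a ha b hb => by
    have := hinf (hsup (hw a ha b hb) hd23) (hsup hp1 hp2); rwa [lemH] at this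
  have hnegT : ∀ a ∈ T, -a ∈ T := fun a ha => by
    have := hsub 0 h0T a ha; rwa [zero_sub] at this
  have haddT : ∀ a ∈ T, ∀ b ∈ T, a + b ∈ T := fun a ha b hb => by
    have := hsub a ha (-b) (hnegT b hb); rwa [sub_neg_eq_add] at this
  have ht23 : ∀ a ∈ T, ∀ b ∈ T, span F {(![0,a,-b] : Fin 3 → F)} ∈ S := fun a ha b hb => by
    have := hinf (hsup ha (hsv b hb)) (hsup hp2 hp3); rwa [lemI] at this
  have hob : ∀ b ∈ T, span F {(![0,b,1] : Fin 3 → F)} ∈ S := fun b hb => by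
    have := ht23 b hb (-1) (hnegT 1 h1T)
    rwa [show (![0,b,-(-1:F)] : Fin 3 → F) = ![0,b,1] by norm_num] at this
  have hmulT : ∀ a ∈ T, ∀ b ∈ T, a * b ∈ T := fun a ha b hb => by
    have h1 : span F {(![1,a*b,a] : Fin 3 → F)} ∈ S := by
      have := hinf (hsup (hdiag a ha) hp2) (hsup hp1 (hob b hb)); rwa [lemJ] at this
    have := hinf (hsup h1 hp3) (hsup hp1 hp2); rwa [lemK] at this
  have hinvT : ∀ a ∈ T, a⁻¹ ∈ T := fun a ha => by
    rcases eq_or_ne a 0 with rfl | ha0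
    · rwa [inv_zero]
    · have h1 : span F {(![0,a,-1] : Fin 3 → F)} ∈ S := by
        have := ht23 a ha 1 h1T
        rwa [show (![0,a,-(1:F)] : Fin 3 → F) = ![0,a,-1] by norm_num] at this
      have h2 : span F {(![0,1,-a⁻¹] : Fin 3 → F)} ∈ S := by
        rwa [show span F {(![0,a,-1] : Fin 3 → F)} = span F {(![0,1,-a⁻¹] : Fin 3 → F)} from
          sspan ha0 (by funext i; fin_cases i <;> simp <;> field_simp)] at h1
      have h3 : span F {(![1,1,-a⁻¹] : Fin 3 → F)} ∈ S := by
        have := hinf (hsup h2 hp1) (hsup hp3 hp12); rwa [lemL] at this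
      have h4 : (1 - -a⁻¹ : F) ∈ T := by
        have := hinf (hsup h3 hd23) (hsup hp1 hp2); rwa [lemH] at this
      have := hsub _ h4 1 h1T
      rwa [show (1 - -a⁻¹ - 1 : F) = a⁻¹ by ring] at this
  -- T is a subfield, hence everything
  let K : Subfield F :=
    { carrier := T
      zero_mem' := h0T
      one_mem' := h1T
      add_mem' := fun {a b} ha hb => haddT a ha b hb
      mul_mem' := fun {a b} ha hb => hmulT a ha b hb
      neg_mem' := fun {a} ha => hnegT a ha
      inv_mem' := fun a ha => hinvT a ha }
  have hT : ∀ t : F, t ∈ T := fun t => by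
    have : t ∈ K := by rw [hprime K]; exact Subfield.mem_top t
    exact this
  -- all points with last coordinate 0
  have hxy0 : ∀ x y : F, span F {(![x,y,0] : Fin 3 → F)} ∈ S := fun x y => by
    rcases eq_or_ne x 0 with rfl | hx
    · rcases eq_or_ne y 0 with rfl | hy
      · rwa [show (![0,0,0] : Fin 3 → F) = 0 by funext i; fin_cases i <;> simp, Submodule.span_zero_singleton]
      · rwa [sspan hy (show (![0,y,0] : Fin 3 → F) = y • ![0,1,0] by
          funext i; fin_cases i <;> simp)]
    · rw [sspan hx (show (![x,y,0] : Fin 3 → F) = x • ![1, x⁻¹*y, 0] by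
        funext i; fin_cases i <;> simp <;> field_simp)]
      exact hT (x⁻¹ * y)
  have h0b1 : ∀ b : F, span F {(![0,b,1] : Fin 3 → F)} ∈ S := fun b => hob b (hT b)
  have hab1 : ∀ a b : F, span F {(![a,b,1] : Fin 3 → F)} ∈ S := fun a b => by
    rcases eq_or_ne b 0 with rfl | hb
    · rcases eq_or_ne a 0 with rfl | ha
      · exact hp3
      · rw [sspan ha (show (![a,0,1] : Fin 3 → F) = a • ![1, 0, a⁻¹] by
          funext i; fin_cases i <;> simp <;> field_simp)]
        exact hsv a⁻¹ (hT a⁻¹)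
    · have := hinf (hsup (hxy0 a b) hp3) (hsup hp1 (h0b1 b))
      rwa [lemM a b hb] at this
  have hpoint : ∀ v : Fin 3 → F, span F {v} ∈ S := fun v => by
    rw [show v = ![v 0, v 1, v 2] from veta v]
    rcases eq_or_ne (v 2) 0 with h2 | h2
    · rw [h2]; exact hxy0 _ _
    · rw [sspan h2 (show (![v 0, v 1, v 2] : Fin 3 → F) = v 2 • ![(v 2)⁻¹ * v 0, (v 2)⁻¹ * v 1, 1] by
        funext i; fin_cases i <;> simp <;> field_simp <;> ring)]
      exact hab1 _ _
  have hfin : ∀ s : Finset (Fin 3 → F), span F (↑s) ∈ S := by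
    intro s
    classical
    induction s using Finset.induction_on with
    | empty => simpa using hbot
    | insert _ _ h ih =>
      rw [Finset.coe_insert, Submodule.span_insert]
      exact hsup (hpoint _) ih
  intro W
  obtain ⟨s, hsW⟩ := IsNoetherian.noetherian W
  rw [← hsW]
  exact hfin s


/-- Over a prime field `F` (no proper subfield), the four points
`F·(1,0,0)`, `F·(0,1,0)`, `F·(0,0,1)`, `F·(1,1,1)` generate the subspace
lattice of `F³`. -/
theorem stmt_17 (F : Type*) [Field F] (hprime : ∀ K : Subfield F, K = ⊤) :
    latticeClosure
      ({Submodule.span F {(![1, 0, 0] : Fin 3 → F)},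
        Submodule.span F {(![0, 1, 0] : Fin 3 → F)},
        Submodule.span F {(![0, 0, 1] : Fin 3 → F)},
        Submodule.span F {(![1, 1, 1] : Fin 3 → F)}} :
        Set (Submodule F (Fin 3 → F))) = Set.univ := by
  refine Set.eq_univ_of_forall fun W => ?_
  have hsl : IsSublattice (latticeClosure
      ({Submodule.span F {(![1, 0, 0] : Fin 3 → F)},
        Submodule.span F {(![0, 1, 0] : Fin 3 → F)},
        Submodule.span F {(![0, 0, 1] : Fin 3 → F)},
        Submodule.span F {(![1, 1, 1] : Fin 3 → F)}} :
        Set (Submodule F (Fin 3 → F)))) := isSublattice_latticeClosure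
  refine key hprime _ hsl.supClosed hsl.infClosed ?_ ?_ ?_ ?_ W <;>
    exact subset_latticeClosure (by simp)
end

section
/- Let F be a field and let L be the subspace lattice of F³. Then no 4-element subset {g_1, g_2, g_3, g_4} of L in which exactly two of the g_i are one-dimensional (points) and exactly two are two-dimensional (lines) generates L. -/
open Module Submodule

namespace Stmt18

variable {F : Type*} [Field F]

lemma rk_le3 (X : Submodule F (Fin 3 → F)) : finrank F X ≤ 3 := by
  simpa using X.finrank_le

lemma eq_top_of_rk3 {X : Submodule F (Fin 3 → F)} (h : 3 ≤ finrank F X) : X = ⊤ :=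
  Submodule.eq_top_of_finrank_eq (by have := rk_le3 X; simp only [Module.finrank_fin_fun]; omega)

lemma eq_bot_of_rk0 {X : Submodule F (Fin 3 → F)} (h : finrank F X = 0) : X = ⊥ :=
  Submodule.finrank_eq_zero.mp h

lemma rk_sup_le (X Y : Submodule F (Fin 3 → F)) :
    finrank F ↥(X ⊔ Y) ≤ finrank F X + finrank F Y := by
  have := Submodule.finrank_sup_add_finrank_inf_eq X Y; omega

lemma rk_inf_ge (X Y : Submodule F (Fin 3 → F)) :
    finrank F X + finrank F Y ≤ 3 + finrank F ↥(X ⊓ Y) := by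
  have h := Submodule.finrank_sup_add_finrank_inf_eq X Y
  have h2 := rk_le3 (X ⊔ Y); omega

lemma sup_point {X Y u : Submodule F (Fin 3 → F)} (hX : finrank F X = 1) (hY : finrank F Y = 1)
    (hne : X ≠ Y) (hXu : X ≤ u) (hYu : Y ≤ u) (hu : finrank F u ≤ 2) :
    X ⊔ Y = u ∧ finrank F u = 2 := by
  have hlt : X < X ⊔ Y := by
    rcases lt_or_eq_of_le (le_sup_left : X ≤ X ⊔ Y) with h | h
    · exact h
    · have hYX : Y ≤ X := le_sup_right.trans h.ge
      exact absurd (Submodule.eq_of_le_of_finrank_le hYX (by omega)).symm hne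
  have h2 : 2 ≤ finrank F ↥(X ⊔ Y) := by
    have := Submodule.finrank_lt_finrank_of_lt hlt; omega
  have he : X ⊔ Y = u := Submodule.eq_of_le_of_finrank_le (sup_le hXu hYu) (by omega)
  refine ⟨he, ?_⟩
  have := he ▸ h2
  omega

lemma inf_line {X Y s : Submodule F (Fin 3 → F)} (hX : finrank F X = 2) (hY : finrank F Y = 2)
    (hne : X ≠ Y) (hsX : s ≤ X) (hsY : s ≤ Y) (hs : 1 ≤ finrank F s) :
    X ⊓ Y = s ∧ finrank F s = 1 := by
  have hlt : X ⊓ Y < X := by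
    rcases lt_or_eq_of_le (inf_le_left : X ⊓ Y ≤ X) with h | h
    · exact h
    · have hXY : X ≤ Y := h.ge.trans inf_le_right
      exact absurd (Submodule.eq_of_le_of_finrank_le hXY (by omega)) hne
  have h1 : finrank F ↥(X ⊓ Y) ≤ 1 := by
    have := Submodule.finrank_lt_finrank_of_lt hlt; omega
  have he : s = X ⊓ Y := Submodule.eq_of_le_of_finrank_le (le_inf hsX hsY) (by omega)
  refine ⟨he.symm, ?_⟩
  have := he ▸ hs
  rw [he]; omega

lemma sup_top_of {X Y : Submodule F (Fin 3 → F)} (h2 : 2 ≤ finrank F Y) (h : ¬ X ≤ Y) :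
    X ⊔ Y = ⊤ := by
  have hlt : Y < X ⊔ Y := by
    rcases lt_or_eq_of_le (le_sup_right : Y ≤ X ⊔ Y) with hh | hh
    · exact hh
    · exact absurd (le_sup_left.trans hh.ge : X ≤ Y) h
  have := Submodule.finrank_lt_finrank_of_lt hlt
  exact eq_top_of_rk3 (by omega)

lemma sup_top_of' {X Y : Submodule F (Fin 3 → F)} (h2 : 2 ≤ finrank F X) (h : ¬ Y ≤ X) :
    X ⊔ Y = ⊤ := by
  rw [sup_comm]; exact sup_top_of h2 h

lemma inf_point {X Y : Submodule F (Fin 3 → F)} (hX : finrank F X = 1) (h : ¬ X ≤ Y) :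
    X ⊓ Y = ⊥ := by
  have hlt : X ⊓ Y < X := by
    rcases lt_or_eq_of_le (inf_le_left : X ⊓ Y ≤ X) with hh | hh
    · exact hh
    · exact absurd (hh.ge.trans inf_le_right : X ≤ Y) h
  have := Submodule.finrank_lt_finrank_of_lt hlt
  exact eq_bot_of_rk0 (by omega)

lemma inf_point' {X Y : Submodule F (Fin 3 → F)} (hY : finrank F Y = 1) (h : ¬ Y ≤ X) :
    X ⊓ Y = ⊥ := by
  rw [inf_comm]; exact inf_point hY h

variable (p₁ p₂ l₁ l₂ : Submodule F (Fin 3 → F))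

def Mem (X : Submodule F (Fin 3 → F)) : Prop :=
  X = ⊥ ∨ X = ⊤ ∨
  (finrank F X = 1 ∧
    (X = p₁ ∨ X = p₂ ∨ X = l₁ ⊓ l₂ ∨ X = (p₁ ⊔ p₂) ⊓ l₁ ∨ X = (p₁ ⊔ p₂) ⊓ l₂)) ∨
  (finrank F X = 2 ∧
    (X = l₁ ∨ X = l₂ ∨ X = p₁ ⊔ p₂ ∨ X = l₁ ⊓ l₂ ⊔ p₁ ∨ X = l₁ ⊓ l₂ ⊔ p₂))

variable {p₁ p₂ l₁ l₂}

lemma mem_line {u : Submodule F (Fin 3 → F)} (h2 : finrank F u = 2)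
    (hv : u = l₁ ∨ u = l₂ ∨ u = p₁ ⊔ p₂ ∨ u = l₁ ⊓ l₂ ⊔ p₁ ∨ u = l₁ ⊓ l₂ ⊔ p₂) :
    Mem p₁ p₂ l₁ l₂ u := Or.inr (Or.inr (Or.inr ⟨h2, hv⟩))

lemma mem_point {u : Submodule F (Fin 3 → F)} (h1 : finrank F u = 1)
    (hv : u = p₁ ∨ u = p₂ ∨ u = l₁ ⊓ l₂ ∨ u = (p₁ ⊔ p₂) ⊓ l₁ ∨ u = (p₁ ⊔ p₂) ⊓ l₂) :
    Mem p₁ p₂ l₁ l₂ u := Or.inr (Or.inr (Or.inl ⟨h1, hv⟩))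

lemma sup_point_mem {X Y u : Submodule F (Fin 3 → F)} (hX1 : finrank F X = 1)
    (hY1 : finrank F Y = 1) (hne : X ≠ Y) (hXu : X ≤ u) (hYu : Y ≤ u)
    (hu : finrank F u ≤ 2)
    (hv : u = l₁ ∨ u = l₂ ∨ u = p₁ ⊔ p₂ ∨ u = l₁ ⊓ l₂ ⊔ p₁ ∨ u = l₁ ⊓ l₂ ⊔ p₂) :
    Mem p₁ p₂ l₁ l₂ (X ⊔ Y) := by
  obtain ⟨he, h2⟩ := sup_point hX1 hY1 hne hXu hYu hu
  rw [he]; exact mem_line h2 hv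

lemma inf_line_mem {X Y s : Submodule F (Fin 3 → F)} (hX2 : finrank F X = 2)
    (hY2 : finrank F Y = 2) (hne : X ≠ Y) (hsX : s ≤ X) (hsY : s ≤ Y)
    (hs : 1 ≤ finrank F s)
    (hv : s = p₁ ∨ s = p₂ ∨ s = l₁ ⊓ l₂ ∨ s = (p₁ ⊔ p₂) ⊓ l₁ ∨ s = (p₁ ⊔ p₂) ⊓ l₂) :
    Mem p₁ p₂ l₁ l₂ (X ⊓ Y) := by
  obtain ⟨he, h1⟩ := inf_line hX2 hY2 hne hsX hsY hs
  rw [he]; exact mem_point h1 hv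

theorem isSublattice (hp₁ : finrank F p₁ = 1) (hp₂ : finrank F p₂ = 1)
    (hl₁ : finrank F l₁ = 2) (hl₂ : finrank F l₂ = 2) :
    IsSublattice {X | Mem p₁ p₂ l₁ l₂ X} := by
  constructor
  · -- SupClosed
    intro X hX Y hY
    rcases hX with rfl | rfl | ⟨hX1, hXv⟩ | ⟨hX2, hXv⟩
    · rw [bot_sup_eq]; exact hY
    · rw [top_sup_eq]; exact Or.inr (Or.inl rfl)
    · rcases hY with rfl | rfl | ⟨hY1, hYv⟩ | ⟨hY2, hYv⟩
      · rw [sup_bot_eq]; exact mem_point hX1 hXv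
      · rw [sup_top_eq]; exact Or.inr (Or.inl rfl)
      · -- point ⊔ point
        by_cases hne : X = Y
        · subst hne; rw [sup_idem]; exact mem_point hX1 hXv
        · rcases hXv with hx | hx | hx | hx | hx <;>
            rcases hYv with hy | hy | hy | hy | hy <;>
            rw [hx] at hX1 hne ⊢ <;> rw [hy] at hY1 hne ⊢
          · exact absurd rfl hne
          · exact sup_point_mem hX1 hY1 hne le_sup_left le_sup_right
              (by have := rk_sup_le p₁ p₂; omega) (Or.inr (Or.inr (Or.inl rfl)))
          · exact sup_point_mem hX1 hY1 hne le_sup_right le_sup_left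
              (by have := rk_sup_le (l₁ ⊓ l₂) p₁; omega) (Or.inr (Or.inr (Or.inr (Or.inl rfl))))
          · exact sup_point_mem hX1 hY1 hne le_sup_left inf_le_left
              (by have := rk_sup_le p₁ p₂; omega) (Or.inr (Or.inr (Or.inl rfl)))
          · exact sup_point_mem hX1 hY1 hne le_sup_left inf_le_left
              (by have := rk_sup_le p₁ p₂; omega) (Or.inr (Or.inr (Or.inl rfl)))
          · exact sup_point_mem hX1 hY1 hne le_sup_right le_sup_left
              (by have := rk_sup_le p₁ p₂; omega) (Or.inr (Or.inr (Or.inl rfl)))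
          · exact absurd rfl hne
          · exact sup_point_mem hX1 hY1 hne le_sup_right le_sup_left
              (by have := rk_sup_le (l₁ ⊓ l₂) p₂; omega) (Or.inr (Or.inr (Or.inr (Or.inr rfl))))
          · exact sup_point_mem hX1 hY1 hne le_sup_right inf_le_left
              (by have := rk_sup_le p₁ p₂; omega) (Or.inr (Or.inr (Or.inl rfl)))
          · exact sup_point_mem hX1 hY1 hne le_sup_right inf_le_left
              (by have := rk_sup_le p₁ p₂; omega) (Or.inr (Or.inr (Or.inl rfl)))
          · exact sup_point_mem hX1 hY1 hne le_sup_left le_sup_right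
              (by have := rk_sup_le (l₁ ⊓ l₂) p₁; omega) (Or.inr (Or.inr (Or.inr (Or.inl rfl))))
          · exact sup_point_mem hX1 hY1 hne le_sup_left le_sup_right
              (by have := rk_sup_le (l₁ ⊓ l₂) p₂; omega) (Or.inr (Or.inr (Or.inr (Or.inr rfl))))
          · exact absurd rfl hne
          · exact sup_point_mem hX1 hY1 hne inf_le_left inf_le_right
              (le_of_eq hl₁) (Or.inl rfl)
          · exact sup_point_mem hX1 hY1 hne inf_le_right inf_le_right
              (le_of_eq hl₂) (Or.inr (Or.inl rfl))
          · exact sup_point_mem hX1 hY1 hne inf_le_left le_sup_left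
              (by have := rk_sup_le p₁ p₂; omega) (Or.inr (Or.inr (Or.inl rfl)))
          · exact sup_point_mem hX1 hY1 hne inf_le_left le_sup_right
              (by have := rk_sup_le p₁ p₂; omega) (Or.inr (Or.inr (Or.inl rfl)))
          · exact sup_point_mem hX1 hY1 hne inf_le_right inf_le_left
              (le_of_eq hl₁) (Or.inl rfl)
          · exact absurd rfl hne
          · exact sup_point_mem hX1 hY1 hne inf_le_left inf_le_left
              (by have := rk_sup_le p₁ p₂; omega) (Or.inr (Or.inr (Or.inl rfl)))
          · exact sup_point_mem hX1 hY1 hne inf_le_left le_sup_left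
              (by have := rk_sup_le p₁ p₂; omega) (Or.inr (Or.inr (Or.inl rfl)))
          · exact sup_point_mem hX1 hY1 hne inf_le_left le_sup_right
              (by have := rk_sup_le p₁ p₂; omega) (Or.inr (Or.inr (Or.inl rfl)))
          · exact sup_point_mem hX1 hY1 hne inf_le_right inf_le_right
              (le_of_eq hl₂) (Or.inr (Or.inl rfl))
          · exact sup_point_mem hX1 hY1 hne inf_le_left inf_le_left
              (by have := rk_sup_le p₁ p₂; omega) (Or.inr (Or.inr (Or.inl rfl)))
          · exact absurd rfl hne
      · -- point ⊔ line
        by_cases hle : X ≤ Y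
        · rw [sup_eq_right.mpr hle]; exact mem_line hY2 hYv
        · rw [sup_top_of (by omega) hle]; exact Or.inr (Or.inl rfl)
    · rcases hY with rfl | rfl | ⟨hY1, hYv⟩ | ⟨hY2, hYv⟩
      · rw [sup_bot_eq]; exact mem_line hX2 hXv
      · rw [sup_top_eq]; exact Or.inr (Or.inl rfl)
      · -- line ⊔ point
        by_cases hle : Y ≤ X
        · rw [sup_eq_left.mpr hle]; exact mem_line hX2 hXv
        · rw [sup_top_of' (by omega) hle]; exact Or.inr (Or.inl rfl)
      · -- line ⊔ line
        by_cases hne : X = Y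
        · subst hne; rw [sup_idem]; exact mem_line hX2 hXv
        · have hle : ¬ Y ≤ X := fun h =>
            hne (Submodule.eq_of_le_of_finrank_le h (by omega)).symm
          rw [sup_top_of' (by omega) hle]; exact Or.inr (Or.inl rfl)
  · -- InfClosed
    intro X hX Y hY
    rcases hX with rfl | rfl | ⟨hX1, hXv⟩ | ⟨hX2, hXv⟩
    · rw [bot_inf_eq]; exact Or.inl rfl
    · rw [top_inf_eq]; exact hY
    · rcases hY with rfl | rfl | ⟨hY1, hYv⟩ | ⟨hY2, hYv⟩
      · rw [inf_bot_eq]; exact Or.inl rfl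
      · rw [inf_top_eq]; exact mem_point hX1 hXv
      · -- point ⊓ point
        by_cases hne : X = Y
        · subst hne; rw [inf_idem]; exact mem_point hX1 hXv
        · have hle : ¬ X ≤ Y := fun h =>
            hne (Submodule.eq_of_le_of_finrank_le h (by omega))
          rw [inf_point (by omega) hle]; exact Or.inl rfl
      · -- point ⊓ line
        by_cases hle : X ≤ Y
        · rw [inf_eq_left.mpr hle]; exact mem_point hX1 hXv
        · rw [inf_point (by omega) hle]; exact Or.inl rfl
    · rcases hY with rfl | rfl | ⟨hY1, hYv⟩ | ⟨hY2, hYv⟩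
      · rw [inf_bot_eq]; exact Or.inl rfl
      · rw [inf_top_eq]; exact mem_line hX2 hXv
      · -- line ⊓ point
        by_cases hle : Y ≤ X
        · rw [inf_eq_right.mpr hle]; exact mem_point hY1 hYv
        · rw [inf_point' (by omega) hle]; exact Or.inl rfl
      · -- line ⊓ line
        by_cases hne : X = Y
        · subst hne; rw [inf_idem]; exact mem_line hX2 hXv
        · rcases hXv with hx | hx | hx | hx | hx <;>
            rcases hYv with hy | hy | hy | hy | hy <;>
            rw [hx] at hX2 hne ⊢ <;> rw [hy] at hY2 hne ⊢
          · exact absurd rfl hne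
          · exact inf_line_mem hX2 hY2 hne inf_le_left inf_le_right
              (by have := rk_inf_ge l₁ l₂; omega) (Or.inr (Or.inr (Or.inl rfl)))
          · exact inf_line_mem hX2 hY2 hne inf_le_right inf_le_left
              (by have := rk_inf_ge (p₁ ⊔ p₂) l₁; omega) (Or.inr (Or.inr (Or.inr (Or.inl rfl))))
          · exact inf_line_mem hX2 hY2 hne inf_le_left le_sup_left
              (by have := rk_inf_ge l₁ l₂; omega) (Or.inr (Or.inr (Or.inl rfl)))
          · exact inf_line_mem hX2 hY2 hne inf_le_left le_sup_left
              (by have := rk_inf_ge l₁ l₂; omega) (Or.inr (Or.inr (Or.inl rfl)))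
          · exact inf_line_mem hX2 hY2 hne inf_le_right inf_le_left
              (by have := rk_inf_ge l₁ l₂; omega) (Or.inr (Or.inr (Or.inl rfl)))
          · exact absurd rfl hne
          · exact inf_line_mem hX2 hY2 hne inf_le_right inf_le_left
              (by have := rk_inf_ge (p₁ ⊔ p₂) l₂; omega) (Or.inr (Or.inr (Or.inr (Or.inr rfl))))
          · exact inf_line_mem hX2 hY2 hne inf_le_right le_sup_left
              (by have := rk_inf_ge l₁ l₂; omega) (Or.inr (Or.inr (Or.inl rfl)))
          · exact inf_line_mem hX2 hY2 hne inf_le_right le_sup_left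
              (by have := rk_inf_ge l₁ l₂; omega) (Or.inr (Or.inr (Or.inl rfl)))
          · exact inf_line_mem hX2 hY2 hne inf_le_left inf_le_right
              (by have := rk_inf_ge (p₁ ⊔ p₂) l₁; omega) (Or.inr (Or.inr (Or.inr (Or.inl rfl))))
          · exact inf_line_mem hX2 hY2 hne inf_le_left inf_le_right
              (by have := rk_inf_ge (p₁ ⊔ p₂) l₂; omega) (Or.inr (Or.inr (Or.inr (Or.inr rfl))))
          · exact absurd rfl hne
          · exact inf_line_mem hX2 hY2 hne le_sup_left le_sup_right
              (le_of_eq hp₁.symm) (Or.inl rfl)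
          · exact inf_line_mem hX2 hY2 hne le_sup_right le_sup_right
              (le_of_eq hp₂.symm) (Or.inr (Or.inl rfl))
          · exact inf_line_mem hX2 hY2 hne le_sup_left inf_le_left
              (by have := rk_inf_ge l₁ l₂; omega) (Or.inr (Or.inr (Or.inl rfl)))
          · exact inf_line_mem hX2 hY2 hne le_sup_left inf_le_right
              (by have := rk_inf_ge l₁ l₂; omega) (Or.inr (Or.inr (Or.inl rfl)))
          · exact inf_line_mem hX2 hY2 hne le_sup_right le_sup_left
              (le_of_eq hp₁.symm) (Or.inl rfl)
          · exact absurd rfl hne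
          · exact inf_line_mem hX2 hY2 hne le_sup_left le_sup_left
              (by have := rk_inf_ge l₁ l₂; omega) (Or.inr (Or.inr (Or.inl rfl)))
          · exact inf_line_mem hX2 hY2 hne le_sup_left inf_le_left
              (by have := rk_inf_ge l₁ l₂; omega) (Or.inr (Or.inr (Or.inl rfl)))
          · exact inf_line_mem hX2 hY2 hne le_sup_left inf_le_right
              (by have := rk_inf_ge l₁ l₂; omega) (Or.inr (Or.inr (Or.inl rfl)))
          · exact inf_line_mem hX2 hY2 hne le_sup_right le_sup_right
              (le_of_eq hp₂.symm) (Or.inr (Or.inl rfl))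
          · exact inf_line_mem hX2 hY2 hne le_sup_left le_sup_left
              (by have := rk_inf_ge l₁ l₂; omega) (Or.inr (Or.inr (Or.inl rfl)))
          · exact absurd rfl hne
def bits : Fin 7 → Fin 3 → Bool :=
  ![![true,false,false],![false,true,false],![false,false,true],
    ![true,true,false],![true,false,true],![false,true,true],![true,true,true]]

def w (F : Type*) [Field F] : Fin 7 → Fin 3 → F := fun j i => if bits j i then 1 else 0

lemma bits_injective : Function.Injective bits := by decide

lemma bits_exists_true : ∀ j : Fin 7, ∃ i, bits j i = true := by decide

lemma w_ne_zero (j : Fin 7) : w F j ≠ 0 := by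
  obtain ⟨i, hi⟩ := bits_exists_true j
  intro h
  have h0 : w F j i = 0 := by rw [h]; rfl
  simp [w, hi] at h0

lemma span_ne_aux {v u : Fin 3 → F} {i : Fin 3} (hv : v i = 1) (hu : u i = 0) :
    Submodule.span F {v} ≠ Submodule.span F {u} := by
  intro he
  have hm : v ∈ Submodule.span F {u} := he ▸ Submodule.mem_span_singleton_self v
  obtain ⟨c, hc⟩ := Submodule.mem_span_singleton.mp hm
  have h2 := congrFun hc i
  rw [Pi.smul_apply, hu, smul_zero, hv] at h2
  exact one_ne_zero h2.symm

lemma span_w_injective : Function.Injective (fun j => Submodule.span F {w F j}) := by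
  intro j k h
  by_contra hne
  have hb : bits j ≠ bits k := fun e => hne (bits_injective e)
  obtain ⟨i, hi⟩ := Function.ne_iff.mp hb
  rcases hbj : bits j i <;> rcases hbk : bits k i
  · rw [hbj, hbk] at hi; exact hi rfl
  · exact span_ne_aux (v := w F k) (u := w F j) (i := i)
      (by simp [w, hbk]) (by simp [w, hbj]) h.symm
  · exact span_ne_aux (v := w F j) (u := w F k) (i := i)
      (by simp [w, hbj]) (by simp [w, hbk]) h
  · rw [hbj, hbk] at hi; exact hi rfl

end Stmt18

open Stmt18 Module Submodule

/-- No quadruple of subspaces of `F³` consisting of exactly two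
points (1-dimensional subspaces) and exactly two lines (2-dimensional
subspaces) generates the subspace lattice of `F³`. -/
theorem stmt_18 (F : Type*) [Field F] (g : Fin 4 → Submodule F (Fin 3 → F))
    (hpoints : (Finset.univ.filter
      (fun i => Module.finrank F (g i) = 1)).card = 2)
    (hlines : (Finset.univ.filter
      (fun i => Module.finrank F (g i) = 2)).card = 2) :
    latticeClosure (Set.range g) ≠ Set.univ := by
  classical
  intro huniv
  obtain ⟨a, b, hab, hP⟩ := Finset.card_eq_two.mp hpoints
  obtain ⟨c, d, hcd, hL⟩ := Finset.card_eq_two.mp hlines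
  have hga : finrank F (g a) = 1 := by
    have ha : a ∈ Finset.univ.filter (fun i => finrank F (g i) = 1) := by
      rw [hP]; simp
    simpa using (Finset.mem_filter.mp ha).2
  have hgb : finrank F (g b) = 1 := by
    have hb : b ∈ Finset.univ.filter (fun i => finrank F (g i) = 1) := by
      rw [hP]; simp
    simpa using (Finset.mem_filter.mp hb).2
  have hgc : finrank F (g c) = 2 := by
    have hc : c ∈ Finset.univ.filter (fun i => finrank F (g i) = 2) := by
      rw [hL]; simp
    simpa using (Finset.mem_filter.mp hc).2
  have hgd : finrank F (g d) = 2 := by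
    have hd : d ∈ Finset.univ.filter (fun i => finrank F (g i) = 2) := by
      rw [hL]; simp
    simpa using (Finset.mem_filter.mp hd).2
  -- every index is a point or a line
  have hdisj : Disjoint (Finset.univ.filter (fun i => finrank F (g i) = 1))
      (Finset.univ.filter (fun i => finrank F (g i) = 2)) := by
    rw [Finset.disjoint_filter]
    intro i _ h1 h2
    omega
  have huniv4 : (Finset.univ.filter (fun i => finrank F (g i) = 1)) ∪
      (Finset.univ.filter (fun i => finrank F (g i) = 2)) = Finset.univ := by
    apply Finset.eq_univ_of_card
    rw [Finset.card_union_of_disjoint hdisj, hpoints, hlines]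
    rfl
  have hcases : ∀ i : Fin 4,
      (finrank F (g i) = 1 ∧ (g i = g a ∨ g i = g b)) ∨
      (finrank F (g i) = 2 ∧ (g i = g c ∨ g i = g d)) := by
    intro i
    have hi : i ∈ (Finset.univ.filter (fun i => finrank F (g i) = 1)) ∪
        (Finset.univ.filter (fun i => finrank F (g i) = 2)) := by
      rw [huniv4]; exact Finset.mem_univ i
    rcases Finset.mem_union.mp hi with h | h
    · left
      refine ⟨(Finset.mem_filter.mp h).2, ?_⟩
      have : i ∈ ({a, b} : Finset (Fin 4)) := hP ▸ h
      rcases Finset.mem_insert.mp this with rfl | h2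
      · exact Or.inl rfl
      · exact Or.inr (by rw [Finset.mem_singleton.mp h2])
    · right
      refine ⟨(Finset.mem_filter.mp h).2, ?_⟩
      have : i ∈ ({c, d} : Finset (Fin 4)) := hL ▸ h
      rcases Finset.mem_insert.mp this with rfl | h2
      · exact Or.inl rfl
      · exact Or.inr (by rw [Finset.mem_singleton.mp h2])
  -- the generators lie in the 12-element sublattice
  have hsub : Set.range g ⊆ {X | Mem (g a) (g b) (g c) (g d) X} := by
    rintro x ⟨i, rfl⟩
    rcases hcases i with ⟨h1, h2⟩ | ⟨h1, h2⟩
    · exact mem_point h1 (h2.elim Or.inl (fun h => Or.inr (Or.inl h)))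
    · exact mem_line h1 (h2.elim Or.inl (fun h => Or.inr (Or.inl h)))
  have hclos : latticeClosure (Set.range g) ⊆ {X | Mem (g a) (g b) (g c) (g d) X} :=
    latticeClosure_min hsub (isSublattice hga hgb hgc hgd)
  -- pigeonhole: seven distinct points but only five possible points in the sublattice
  set f : Fin 5 → Submodule F (Fin 3 → F) :=
    ![g a, g b, g c ⊓ g d, (g a ⊔ g b) ⊓ g c, (g a ⊔ g b) ⊓ g d] with hf
  have hall : ∀ j : Fin 7, ∃ k : Fin 5, Submodule.span F {w F j} = f k := by
    intro j
    have hm : Submodule.span F {w F j} ∈ latticeClosure (Set.range g) := by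
      rw [huniv]; exact Set.mem_univ _
    have hmem := hclos hm
    have hrk : finrank F (Submodule.span F {w F j}) = 1 :=
      finrank_span_singleton (w_ne_zero j)
    rcases hmem with h | h | ⟨_, h⟩ | ⟨h2, _⟩
    · rw [h, finrank_bot] at hrk; omega
    · rw [h, finrank_top, Module.finrank_fin_fun] at hrk; omega
    · rcases h with h | h | h | h | h
      exacts [⟨0, h⟩, ⟨1, h⟩, ⟨2, h⟩, ⟨3, h⟩, ⟨4, h⟩]
    · rw [hrk] at h2; omega
  choose k hk using hall
  obtain ⟨j₁, j₂, hne, he⟩ := Fintype.exists_ne_map_eq_of_card_lt k (by norm_num)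
  exact hne (span_w_injective (F := F) (show Submodule.span F {w F j₁} = Submodule.span F {w F j₂} by rw [hk j₁, he, ← hk j₂]))
end

section
/- Let F be a field, let L be the subspace lattice of F³, and suppose {g_1, g_2, g_3, g_4} generates L where each g_i is a point (1-dimensional subspace) or a line (2-dimensional subspace). Then each g_i is distinct from the bottom element 0 and the top element F³, and moreover the quadruple is in general position: the g_i form an antichain, no three of the points among them are collinear, and no three of the lines among them are concurrent. -/
namespace Stmt19Aux

open Module Submodule

variable {F : Type*} [Field F]

lemma rankV : Module.finrank F (Fin 3 → F) = 3 := Module.finrank_fin_fun (R := F)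

lemma rank_le3 (U : Submodule F (Fin 3 → F)) : Module.finrank F U ≤ 3 := by
  have h := U.finrank_le
  rwa [rankV] at h

lemma le_rank1 {U W : Submodule F (Fin 3 → F)} (h : U ≤ W)
    (hW : Module.finrank F W = 1) : U = ⊥ ∨ U = W := by
  have hU : Module.finrank F U ≤ 1 := hW ▸ Submodule.finrank_mono h
  rcases Nat.lt_or_ge (Module.finrank F U) 1 with h0 | h1
  · exact Or.inl (Submodule.finrank_eq_zero.mp (by omega))
  · exact Or.inr (Submodule.eq_of_le_of_finrank_le h (by omega))

lemma rank2_le {W U : Submodule F (Fin 3 → F)} (h : W ≤ U)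
    (hW : Module.finrank F W = 2) : U = W ∨ U = ⊤ := by
  have h2 : 2 ≤ Module.finrank F U := hW ▸ Submodule.finrank_mono h
  rcases Nat.lt_or_ge (Module.finrank F U) 3 with hlt | hge
  · exact Or.inl ((Submodule.eq_of_le_of_finrank_le h (by omega)).symm)
  · exact Or.inr (Submodule.eq_top_of_finrank_eq
      (by have := rank_le3 U; rw [rankV]; omega))

lemma sup_rank_one {x y : Submodule F (Fin 3 → F)}
    (hx : Module.finrank F x = 1) (hy : Module.finrank F y = 1)
    (hne : x ≠ y) : Module.finrank F ↥(x ⊔ y) = 2 := by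
  have hinf : x ⊓ y = ⊥ := by
    rcases le_rank1 (inf_le_left : x ⊓ y ≤ x) hx with h | h
    · exact h
    · exfalso
      have hxy : x ≤ y := h ▸ inf_le_right
      exact hne (Submodule.eq_of_le_of_finrank_le hxy (by omega))
  have hf := Submodule.finrank_sup_add_finrank_inf_eq x y
  rw [hinf, finrank_bot] at hf
  omega

lemma inf_rank_one {x y : Submodule F (Fin 3 → F)}
    (hx : Module.finrank F x = 2) (hy : Module.finrank F y = 2)
    (hne : x ≠ y) : Module.finrank F ↥(x ⊓ y) = 1 := by
  have hsup : x ⊔ y = ⊤ := by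
    rcases rank2_le (le_sup_left : x ≤ x ⊔ y) hx with h | h
    · exfalso
      have hyx : y ≤ x := h ▸ le_sup_right
      exact hne ((Submodule.eq_of_le_of_finrank_le hyx (by omega)).symm)
    · exact h
  have hf := Submodule.finrank_sup_add_finrank_inf_eq x y
  rw [hsup, finrank_top, rankV] at hf
  omega

lemma pt_line_sup {x u : Submodule F (Fin 3 → F)}
    (hx : Module.finrank F x = 1) (hu : Module.finrank F u = 2)
    (hle : ¬ x ≤ u) : x ⊔ u = ⊤ := by
  have hinf : x ⊓ u = ⊥ := by
    rcases le_rank1 (inf_le_left : x ⊓ u ≤ x) hx with h | h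
    · exact h
    · exact absurd (h ▸ inf_le_right) hle
  have hf := Submodule.finrank_sup_add_finrank_inf_eq x u
  rw [hinf, finrank_bot] at hf
  exact Submodule.eq_top_of_finrank_eq (by rw [rankV]; have := rank_le3 (x ⊔ u); omega)

lemma exists_line {x : Submodule F (Fin 3 → F)} (hx : Module.finrank F x = 1) :
    ∃ l : Submodule F (Fin 3 → F), Module.finrank F l = 2 ∧ x ≤ l := by
  have hxt : x ≠ ⊤ := by
    intro h; rw [h, finrank_top, rankV] at hx; omega
  obtain ⟨v, hv⟩ : ∃ v, v ∉ x := by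
    by_contra h
    push_neg at h
    exact hxt (Submodule.eq_top_iff'.mpr h)
  have hv0 : v ≠ 0 := fun h => hv (h ▸ x.zero_mem)
  have hs : Module.finrank F ↥(F ∙ v) = 1 := finrank_span_singleton hv0
  have hne : x ≠ F ∙ v := by
    intro h
    exact hv (h ▸ Submodule.mem_span_singleton_self v)
  exact ⟨x ⊔ F ∙ v, sup_rank_one hx hs hne, le_sup_left⟩

lemma exists_point {u : Submodule F (Fin 3 → F)} (hu : Module.finrank F u = 2) :
    ∃ q : Submodule F (Fin 3 → F), Module.finrank F q = 1 ∧ q ≤ u := by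
  have hub : u ≠ ⊥ := by
    intro h; rw [h, finrank_bot] at hu; omega
  obtain ⟨w, hw, hw0⟩ := (Submodule.ne_bot_iff u).mp hub
  exact ⟨F ∙ w, finrank_span_singleton hw0,
    (Submodule.span_singleton_le_iff_mem w u).mpr hw⟩

/-- The key proper sublattice: everything below/equal to the line `l`,
everything above/equal to the point `q`, plus `⊥` and `⊤`. -/
def SL (q l : Submodule F (Fin 3 → F)) : Set (Submodule F (Fin 3 → F)) :=
  {W | W = ⊥ ∨ W = ⊤ ∨ W = q ∨ W = l ∨
    (Module.finrank F W = 1 ∧ W ≤ l) ∨ (Module.finrank F W = 2 ∧ q ≤ W)}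

variable {q l : Submodule F (Fin 3 → F)}

lemma mem_SL_iff (hq : Module.finrank F q = 1) (hl : Module.finrank F l = 2)
    {W : Submodule F (Fin 3 → F)} :
    W ∈ SL q l ↔ W = ⊥ ∨ W = ⊤ ∨
      (Module.finrank F W = 1 ∧ (W = q ∨ W ≤ l)) ∨
      (Module.finrank F W = 2 ∧ (W = l ∨ q ≤ W)) := by
  constructor
  · rintro (rfl | rfl | rfl | rfl | ⟨h1, h2⟩ | ⟨h1, h2⟩)
    · exact Or.inl rfl
    · exact Or.inr (Or.inl rfl)
    · exact Or.inr (Or.inr (Or.inl ⟨hq, Or.inl rfl⟩))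
    · exact Or.inr (Or.inr (Or.inr ⟨hl, Or.inl rfl⟩))
    · exact Or.inr (Or.inr (Or.inl ⟨h1, Or.inr h2⟩))
    · exact Or.inr (Or.inr (Or.inr ⟨h1, Or.inr h2⟩))
  · rintro (rfl | rfl | ⟨h1, rfl | h2⟩ | ⟨h1, rfl | h2⟩)
    · exact Or.inl rfl
    · exact Or.inr (Or.inl rfl)
    · exact Or.inr (Or.inr (Or.inl rfl))
    · exact Or.inr (Or.inr (Or.inr (Or.inr (Or.inl ⟨h1, h2⟩))))
    · exact Or.inr (Or.inr (Or.inr (Or.inl rfl)))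
    · exact Or.inr (Or.inr (Or.inr (Or.inr (Or.inr ⟨h1, h2⟩))))

lemma isSublattice_SL (hq : Module.finrank F q = 1)
    (hl : Module.finrank F l = 2) : IsSublattice (SL q l) := by
  constructor
  · -- SupClosed
    intro A hA B hB
    rw [mem_SL_iff hq hl] at hA hB ⊢
    rcases hA with rfl | rfl | ⟨hA1, hA2⟩ | ⟨hA1, hA2⟩
    · rw [bot_sup_eq]; exact hB
    · simp
    · rcases hB with rfl | rfl | ⟨hB1, hB2⟩ | ⟨hB1, hB2⟩
      · rw [sup_bot_eq]; exact Or.inr (Or.inr (Or.inl ⟨hA1, hA2⟩))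
      · simp
      · -- point ⊔ point
        by_cases hAB : A = B
        · subst hAB; rw [sup_idem]; exact Or.inr (Or.inr (Or.inl ⟨hA1, hA2⟩))
        · have hr : Module.finrank F ↥(A ⊔ B) = 2 := sup_rank_one hA1 hB1 hAB
          rcases hA2 with rfl | hA2
          · exact Or.inr (Or.inr (Or.inr ⟨hr, Or.inr le_sup_left⟩))
          · rcases hB2 with rfl | hB2
            · exact Or.inr (Or.inr (Or.inr ⟨hr, Or.inr le_sup_right⟩))
            · have : A ⊔ B = l :=
                Submodule.eq_of_le_of_finrank_le (sup_le hA2 hB2) (by omega)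
              exact Or.inr (Or.inr (Or.inr ⟨hr, Or.inl this⟩))
      · -- point ⊔ line
        by_cases hle : A ≤ B
        · rw [sup_eq_right.mpr hle]
          exact Or.inr (Or.inr (Or.inr ⟨hB1, hB2⟩))
        · rw [pt_line_sup hA1 hB1 hle]; simp
    · rcases hB with rfl | rfl | ⟨hB1, hB2⟩ | ⟨hB1, hB2⟩
      · rw [sup_bot_eq]; exact Or.inr (Or.inr (Or.inr ⟨hA1, hA2⟩))
      · simp
      · -- line ⊔ point
        by_cases hle : B ≤ A
        · rw [sup_eq_left.mpr hle]
          exact Or.inr (Or.inr (Or.inr ⟨hA1, hA2⟩))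
        · rw [sup_comm, pt_line_sup hB1 hA1 hle]; simp
      · -- line ⊔ line
        by_cases hAB : A = B
        · subst hAB; rw [sup_idem]; exact Or.inr (Or.inr (Or.inr ⟨hA1, hA2⟩))
        · have hsup : A ⊔ B = ⊤ := by
            rcases rank2_le (le_sup_left : A ≤ A ⊔ B) hA1 with h | h
            · exact absurd ((Submodule.eq_of_le_of_finrank_le
                (h ▸ le_sup_right : B ≤ A) (by omega)).symm) hAB
            · exact h
          rw [hsup]; simp
  · -- InfClosed
    intro A hA B hB
    rw [mem_SL_iff hq hl] at hA hB ⊢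
    rcases hA with rfl | rfl | ⟨hA1, hA2⟩ | ⟨hA1, hA2⟩
    · simp
    · rw [top_inf_eq]; exact hB
    · rcases hB with rfl | rfl | ⟨hB1, hB2⟩ | ⟨hB1, hB2⟩
      · simp
      · rw [inf_top_eq]; exact Or.inr (Or.inr (Or.inl ⟨hA1, hA2⟩))
      · -- point ⊓ point
        by_cases hAB : A = B
        · subst hAB; rw [inf_idem]; exact Or.inr (Or.inr (Or.inl ⟨hA1, hA2⟩))
        · have : A ⊓ B = ⊥ := by
            rcases le_rank1 (inf_le_left : A ⊓ B ≤ A) hA1 with h | h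
            · exact h
            · exact absurd (Submodule.eq_of_le_of_finrank_le
                (h ▸ inf_le_right : A ≤ B) (by omega)) hAB
          rw [this]; simp
      · -- point ⊓ line
        by_cases hle : A ≤ B
        · rw [inf_eq_left.mpr hle]
          exact Or.inr (Or.inr (Or.inl ⟨hA1, hA2⟩))
        · have : A ⊓ B = ⊥ := by
            rcases le_rank1 (inf_le_left : A ⊓ B ≤ A) hA1 with h | h
            · exact h
            · exact absurd (h ▸ inf_le_right : A ≤ B) hle
          rw [this]; simp
    · rcases hB with rfl | rfl | ⟨hB1, hB2⟩ | ⟨hB1, hB2⟩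
      · simp
      · rw [inf_top_eq]; exact Or.inr (Or.inr (Or.inr ⟨hA1, hA2⟩))
      · -- line ⊓ point
        by_cases hle : B ≤ A
        · rw [inf_eq_right.mpr hle]
          exact Or.inr (Or.inr (Or.inl ⟨hB1, hB2⟩))
        · have : A ⊓ B = ⊥ := by
            rcases le_rank1 (inf_le_right : A ⊓ B ≤ B) hB1 with h | h
            · exact h
            · exact absurd (h ▸ inf_le_left : B ≤ A) hle
          rw [this]; simp
      · -- line ⊓ line
        by_cases hAB : A = B
        · subst hAB; rw [inf_idem]; exact Or.inr (Or.inr (Or.inr ⟨hA1, hA2⟩))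
        · have hr : Module.finrank F ↥(A ⊓ B) = 1 := inf_rank_one hA1 hB1 hAB
          rcases hA2 with rfl | hA2
          · exact Or.inr (Or.inr (Or.inl ⟨hr, Or.inr inf_le_left⟩))
          · rcases hB2 with rfl | hB2
            · exact Or.inr (Or.inr (Or.inl ⟨hr, Or.inr inf_le_right⟩))
            · have : A ⊓ B = q :=
                (Submodule.eq_of_le_of_finrank_le (le_inf hA2 hB2) (by omega)).symm
              exact Or.inr (Or.inr (Or.inl ⟨hr, Or.inl this⟩))

lemma exists_not_mem_SL (hq : Module.finrank F q = 1)
    (hl : Module.finrank F l = 2) : ∃ r, r ∉ SL q l := by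
  have key : ∀ r : Submodule F (Fin 3 → F), Module.finrank F r = 1 → r ≠ q →
      ¬ r ≤ l → r ∉ SL q l := by
    intro r hr hrq hrl hmem
    rcases hmem with rfl | rfl | rfl | rfl | ⟨h1, h2⟩ | ⟨h1, h2⟩
    · rw [finrank_bot] at hr; omega
    · rw [finrank_top, rankV] at hr; omega
    · exact hrq rfl
    · omega
    · exact hrl h2
    · omega
  by_cases hql : q ≤ l
  · have hlt : l ≠ ⊤ := by intro h; rw [h, finrank_top, rankV] at hl; omega
    obtain ⟨v, hv⟩ : ∃ v, v ∉ l := by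
      by_contra h; push_neg at h; exact hlt (Submodule.eq_top_iff'.mpr h)
    have hv0 : v ≠ 0 := fun h => hv (h ▸ l.zero_mem)
    refine ⟨F ∙ v, key _ (finrank_span_singleton hv0) ?_ ?_⟩
    · intro h
      have : v ∈ q := h ▸ Submodule.mem_span_singleton_self v
      exact hv (hql this)
    · intro h
      exact hv (h (Submodule.mem_span_singleton_self v))
  · have hqb : q ≠ ⊥ := by intro h; rw [h, finrank_bot] at hq; omega
    have hlb : l ≠ ⊥ := by intro h; rw [h, finrank_bot] at hl; omega
    obtain ⟨w, hw, hw0⟩ := (Submodule.ne_bot_iff q).mp hqb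
    obtain ⟨u, hu, hu0⟩ := (Submodule.ne_bot_iff l).mp hlb
    have hspanw : (F ∙ w) = q :=
      Submodule.eq_of_le_of_finrank_le
        ((Submodule.span_singleton_le_iff_mem w q).mpr hw)
        (by rw [finrank_span_singleton hw0]; omega)
    have hunq : u ∉ q := by
      intro hum
      have : (F ∙ u) = q :=
        Submodule.eq_of_le_of_finrank_le
          ((Submodule.span_singleton_le_iff_mem u q).mpr hum)
          (by rw [finrank_span_singleton hu0]; omega)
      exact hql (this ▸ (Submodule.span_singleton_le_iff_mem u l).mpr hu)
    have hwu0 : w + u ≠ 0 := by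
      intro h
      have : w = -u := by rwa [add_eq_zero_iff_eq_neg] at h
      apply hql
      rw [← hspanw, Submodule.span_singleton_le_iff_mem, this]
      exact l.neg_mem hu
    refine ⟨F ∙ (w + u), key _ (finrank_span_singleton hwu0) ?_ ?_⟩
    · intro h
      have hmem : w + u ∈ q := h ▸ Submodule.mem_span_singleton_self (w + u)
      have : u ∈ q := by
        have := q.sub_mem hmem hw
        simpa using this
      exact hunq this
    · intro h
      have hmem : w + u ∈ l := h (Submodule.mem_span_singleton_self (w + u))
      have hwl : w ∈ l := by
        have := l.sub_mem hmem hu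
        simpa using this
      exact hql (hspanw ▸ (Submodule.span_singleton_le_iff_mem w l).mpr hwl)

end Stmt19Aux
namespace Stmt19Aux

open Module Submodule

variable {F : Type*} [Field F]

-- membership helpers
lemma mem_q {q l : Submodule F (Fin 3 → F)} : q ∈ SL q l :=
  Or.inr (Or.inr (Or.inl rfl))
lemma mem_l {q l : Submodule F (Fin 3 → F)} : l ∈ SL q l :=
  Or.inr (Or.inr (Or.inr (Or.inl rfl)))
lemma mem_pt {q l W : Submodule F (Fin 3 → F)} (h1 : Module.finrank F W = 1)
    (h2 : W ≤ l) : W ∈ SL q l :=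
  Or.inr (Or.inr (Or.inr (Or.inr (Or.inl ⟨h1, h2⟩))))
lemma mem_ln {q l W : Submodule F (Fin 3 → F)} (h1 : Module.finrank F W = 2)
    (h2 : q ≤ W) : W ∈ SL q l :=
  Or.inr (Or.inr (Or.inr (Or.inr (Or.inr ⟨h1, h2⟩))))

/-- covering a point and a line -/
lemma cover_pl {x u : Submodule F (Fin 3 → F)}
    (hx : Module.finrank F x = 1) (hu : Module.finrank F u = 2) :
    ∃ q l : Submodule F (Fin 3 → F), Module.finrank F q = 1 ∧ Module.finrank F l = 2 ∧
      x ∈ SL q l ∧ u ∈ SL q l := by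
  by_cases hxu : x ≤ u
  · exact ⟨x, u, hx, hu, mem_q, mem_l⟩
  · obtain ⟨q, hq, hqu⟩ := exists_point hu
    have hxq : x ≠ q := fun h => hxu (h ▸ hqu)
    exact ⟨q, x ⊔ q, hq, sup_rank_one hx hq hxq,
      mem_pt hx le_sup_left, mem_ln hu hqu⟩

/-- covering three points -/
lemma cover_ppp {x y z : Submodule F (Fin 3 → F)}
    (hx : Module.finrank F x = 1) (hy : Module.finrank F y = 1)
    (hz : Module.finrank F z = 1) :
    ∃ q l : Submodule F (Fin 3 → F), Module.finrank F q = 1 ∧ Module.finrank F l = 2 ∧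
      x ∈ SL q l ∧ y ∈ SL q l ∧ z ∈ SL q l := by
  by_cases hyz : y = z
  · obtain ⟨l, hl, hle⟩ := exists_line hz
    exact ⟨x, l, hx, hl, mem_q, mem_pt hy (hyz ▸ hle), mem_pt hz hle⟩
  · exact ⟨x, y ⊔ z, hx, sup_rank_one hy hz hyz, mem_q,
      mem_pt hy le_sup_left, mem_pt hz le_sup_right⟩

/-- covering two points and a line -/
lemma cover_ppl {x y u : Submodule F (Fin 3 → F)}
    (hx : Module.finrank F x = 1) (hy : Module.finrank F y = 1)
    (hu : Module.finrank F u = 2) :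
    ∃ q l : Submodule F (Fin 3 → F), Module.finrank F q = 1 ∧ Module.finrank F l = 2 ∧
      x ∈ SL q l ∧ y ∈ SL q l ∧ u ∈ SL q l := by
  by_cases hxy : x = y
  · obtain ⟨q, l, hq, hl, h1, h2⟩ := cover_pl hx hu
    exact ⟨q, l, hq, hl, h1, hxy ▸ h1, h2⟩
  · have hl : Module.finrank F ↥(x ⊔ y) = 2 := sup_rank_one hx hy hxy
    by_cases hul : u = x ⊔ y
    · exact ⟨x, x ⊔ y, hx, hl, mem_q, mem_pt hy le_sup_right, hul ▸ mem_l⟩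
    · exact ⟨u ⊓ (x ⊔ y), x ⊔ y, inf_rank_one hu hl hul, hl,
        mem_pt hx le_sup_left, mem_pt hy le_sup_right,
        mem_ln hu inf_le_left⟩

/-- covering one point and two lines -/
lemma cover_pll {x u v : Submodule F (Fin 3 → F)}
    (hx : Module.finrank F x = 1) (hu : Module.finrank F u = 2)
    (hv : Module.finrank F v = 2) :
    ∃ q l : Submodule F (Fin 3 → F), Module.finrank F q = 1 ∧ Module.finrank F l = 2 ∧
      x ∈ SL q l ∧ u ∈ SL q l ∧ v ∈ SL q l := by
  by_cases huv : u = v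
  · obtain ⟨q, l, hq, hl, h1, h2⟩ := cover_pl hx hu
    exact ⟨q, l, hq, hl, h1, h2, huv ▸ h2⟩
  · have hq : Module.finrank F ↥(u ⊓ v) = 1 := inf_rank_one hu hv huv
    by_cases hxq : x = u ⊓ v
    · obtain ⟨l, hl, hle⟩ := exists_line hx
      exact ⟨u ⊓ v, l, hq, hl, hxq ▸ mem_q,
        mem_ln hu inf_le_left, mem_ln hv inf_le_right⟩
    · exact ⟨u ⊓ v, x ⊔ u ⊓ v, hq, sup_rank_one hx hq hxq,
        mem_pt hx le_sup_left, mem_ln hu inf_le_left, mem_ln hv inf_le_right⟩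

/-- covering three lines -/
lemma cover_lll {u v w : Submodule F (Fin 3 → F)}
    (hu : Module.finrank F u = 2) (hv : Module.finrank F v = 2)
    (hw : Module.finrank F w = 2) :
    ∃ q l : Submodule F (Fin 3 → F), Module.finrank F q = 1 ∧ Module.finrank F l = 2 ∧
      u ∈ SL q l ∧ v ∈ SL q l ∧ w ∈ SL q l := by
  by_cases huv : u = v
  · by_cases huw : u = w
    · obtain ⟨q, hq, hqu⟩ := exists_point hu
      exact ⟨q, u, hq, hu, mem_l, huv ▸ mem_l, huw ▸ mem_l⟩
    · exact ⟨u ⊓ w, w, inf_rank_one hu hw huw, hw,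
        mem_ln hu inf_le_left, huv ▸ mem_ln hu inf_le_left, mem_l⟩
  · exact ⟨u ⊓ v, w, inf_rank_one hu hv huv, hw,
      mem_ln hu inf_le_left, mem_ln hv inf_le_right, mem_l⟩

/-- covering any three points/lines -/
lemma cover3 {x y z : Submodule F (Fin 3 → F)}
    (hx : Module.finrank F x = 1 ∨ Module.finrank F x = 2)
    (hy : Module.finrank F y = 1 ∨ Module.finrank F y = 2)
    (hz : Module.finrank F z = 1 ∨ Module.finrank F z = 2) :
    ∃ q l : Submodule F (Fin 3 → F), Module.finrank F q = 1 ∧ Module.finrank F l = 2 ∧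
      x ∈ SL q l ∧ y ∈ SL q l ∧ z ∈ SL q l := by
  rcases hx with hx | hx <;> rcases hy with hy | hy <;> rcases hz with hz | hz
  · exact cover_ppp hx hy hz
  · exact cover_ppl hx hy hz
  · obtain ⟨q, l, h1, h2, h3, h4, h5⟩ := cover_ppl hx hz hy
    exact ⟨q, l, h1, h2, h3, h5, h4⟩
  · obtain ⟨q, l, h1, h2, h3, h4, h5⟩ := cover_pll hx hy hz
    exact ⟨q, l, h1, h2, h3, h4, h5⟩
  · obtain ⟨q, l, h1, h2, h3, h4, h5⟩ := cover_ppl hy hz hx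
    exact ⟨q, l, h1, h2, h5, h3, h4⟩
  · obtain ⟨q, l, h1, h2, h3, h4, h5⟩ := cover_pll hy hx hz
    exact ⟨q, l, h1, h2, h4, h3, h5⟩
  · obtain ⟨q, l, h1, h2, h3, h4, h5⟩ := cover_pll hz hx hy
    exact ⟨q, l, h1, h2, h4, h5, h3⟩
  · exact cover_lll hx hy hz

/-- covering a comparable pair plus two arbitrary elements -/
lemma cover4_incomp {p m h x : Submodule F (Fin 3 → F)}
    (hp : Module.finrank F p = 1) (hm : Module.finrank F m = 2) (hpm : p ≤ m)
    (hh : Module.finrank F h = 1 ∨ Module.finrank F h = 2)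
    (hx : Module.finrank F x = 1 ∨ Module.finrank F x = 2) :
    ∃ q l : Submodule F (Fin 3 → F), Module.finrank F q = 1 ∧ Module.finrank F l = 2 ∧
      p ∈ SL q l ∧ m ∈ SL q l ∧ h ∈ SL q l ∧ x ∈ SL q l := by
  have main : ∀ h' x' : Submodule F (Fin 3 → F),
      Module.finrank F h' = 1 → Module.finrank F x' = 2 →
      ∃ q l : Submodule F (Fin 3 → F), Module.finrank F q = 1 ∧ Module.finrank F l = 2 ∧
        p ∈ SL q l ∧ m ∈ SL q l ∧ h' ∈ SL q l ∧ x' ∈ SL q l := by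
    intro h' x' hh' hx'
    by_cases hph : p = h'
    · obtain ⟨q, l, h1, h2, h3, h4, h5⟩ := cover3 (Or.inl hp) (Or.inr hm) (Or.inr hx')
      exact ⟨q, l, h1, h2, h3, h4, hph ▸ h3, h5⟩
    · by_cases hmx : m = x'
      · obtain ⟨q, l, h1, h2, h3, h4, h5⟩ := cover3 (Or.inl hp) (Or.inr hm) (Or.inl hh')
        exact ⟨q, l, h1, h2, h3, h4, h5, hmx ▸ h4⟩
      · exact ⟨m ⊓ x', p ⊔ h', inf_rank_one hm hx' hmx, sup_rank_one hp hh' hph,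
          mem_pt hp le_sup_left, mem_ln hm inf_le_left,
          mem_pt hh' le_sup_right, mem_ln hx' inf_le_right⟩
  rcases hh with hh | hh <;> rcases hx with hx | hx
  · by_cases hhx : h = x
    · obtain ⟨q, l, h1, h2, h3, h4, h5⟩ := cover3 (Or.inl hp) (Or.inr hm) (Or.inl hh)
      exact ⟨q, l, h1, h2, h3, h4, h5, hhx ▸ h5⟩
    · exact ⟨p, h ⊔ x, hp, sup_rank_one hh hx hhx, mem_q, mem_ln hm hpm,
        mem_pt hh le_sup_left, mem_pt hx le_sup_right⟩
  · exact main h x hh hx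
  · obtain ⟨q, l, h1, h2, h3, h4, h5, h6⟩ := main x h hx hh
    exact ⟨q, l, h1, h2, h3, h4, h6, h5⟩
  · by_cases hhx : h = x
    · obtain ⟨q, l, h1, h2, h3, h4, h5⟩ := cover3 (Or.inl hp) (Or.inr hm) (Or.inr hh)
      exact ⟨q, l, h1, h2, h3, h4, h5, hhx ▸ h5⟩
    · exact ⟨h ⊓ x, m, inf_rank_one hh hx hhx, hm, mem_pt hp hpm, mem_l,
        mem_ln hh inf_le_left, mem_ln hx inf_le_right⟩

/-- covering three collinear points plus one arbitrary element -/
lemma cover4_coll {a b c h : Submodule F (Fin 3 → F)}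
    (ha : Module.finrank F a = 1) (hb : Module.finrank F b = 1)
    (hc : Module.finrank F c = 1) (hcoll : a ≤ b ⊔ c)
    (hh : Module.finrank F h = 1 ∨ Module.finrank F h = 2) :
    ∃ q l : Submodule F (Fin 3 → F), Module.finrank F q = 1 ∧ Module.finrank F l = 2 ∧
      a ∈ SL q l ∧ b ∈ SL q l ∧ c ∈ SL q l ∧ h ∈ SL q l := by
  by_cases hbc : b = c
  · obtain ⟨q, l, h1, h2, h3, h4, h5⟩ := cover3 (Or.inl ha) (Or.inl hb) hh
    exact ⟨q, l, h1, h2, h3, h4, hbc ▸ h4, h5⟩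
  · have hl0 : Module.finrank F ↥(b ⊔ c) = 2 := sup_rank_one hb hc hbc
    rcases hh with hh | hh
    · exact ⟨h, b ⊔ c, hh, hl0, mem_pt ha hcoll,
        mem_pt hb le_sup_left, mem_pt hc le_sup_right, mem_q⟩
    · by_cases hhl : h = b ⊔ c
      · obtain ⟨q, hq, hqle⟩ := exists_point hl0
        exact ⟨q, b ⊔ c, hq, hl0, mem_pt ha hcoll,
          mem_pt hb le_sup_left, mem_pt hc le_sup_right, hhl ▸ mem_l⟩
      · exact ⟨h ⊓ (b ⊔ c), b ⊔ c, inf_rank_one hh hl0 hhl, hl0,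
          mem_pt ha hcoll, mem_pt hb le_sup_left, mem_pt hc le_sup_right,
          mem_ln hh inf_le_left⟩

/-- covering three concurrent lines plus one arbitrary element -/
lemma cover4_conc {a b c h : Submodule F (Fin 3 → F)}
    (ha : Module.finrank F a = 2) (hb : Module.finrank F b = 2)
    (hc : Module.finrank F c = 2) (hconc : a ⊓ b ≤ c)
    (hh : Module.finrank F h = 1 ∨ Module.finrank F h = 2) :
    ∃ q l : Submodule F (Fin 3 → F), Module.finrank F q = 1 ∧ Module.finrank F l = 2 ∧
      a ∈ SL q l ∧ b ∈ SL q l ∧ c ∈ SL q l ∧ h ∈ SL q l := by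
  by_cases hab : a = b
  · have hbc : b = c := by
      rw [hab, inf_idem] at hconc
      exact Submodule.eq_of_le_of_finrank_le hconc (by omega)
    obtain ⟨q, l, h1, h2, h3, h4, h5⟩ := cover3 (Or.inr ha) (Or.inr hb) hh
    exact ⟨q, l, h1, h2, h3, h4, hbc ▸ h4, h5⟩
  · have hp0 : Module.finrank F ↥(a ⊓ b) = 1 := inf_rank_one ha hb hab
    rcases hh with hh | hh
    · by_cases hhp : h = a ⊓ b
      · obtain ⟨l, hl, hle⟩ := exists_line hp0
        exact ⟨a ⊓ b, l, hp0, hl, mem_ln ha inf_le_left,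
          mem_ln hb inf_le_right, mem_ln hc hconc, hhp ▸ mem_q⟩
      · exact ⟨a ⊓ b, a ⊓ b ⊔ h, hp0, sup_rank_one hp0 hh (Ne.symm hhp),
          mem_ln ha inf_le_left, mem_ln hb inf_le_right, mem_ln hc hconc,
          mem_pt hh le_sup_right⟩
    · exact ⟨a ⊓ b, h, hp0, hh, mem_ln ha inf_le_left,
        mem_ln hb inf_le_right, mem_ln hc hconc, mem_l⟩

lemma idx2 : ∀ i j : Fin 4, i ≠ j → ∃ k l : Fin 4,
    ∀ m : Fin 4, m = i ∨ m = j ∨ m = k ∨ m = l := by decide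

lemma idx3 : ∀ i j k : Fin 4, i ≠ j → j ≠ k → i ≠ k → ∃ l : Fin 4,
    ∀ m : Fin 4, m = i ∨ m = j ∨ m = k ∨ m = l := by decide

end Stmt19Aux
/-- A generating quadruple of the subspace lattice of `F³` whose
members are points or lines avoids `⊥` and `⊤` and is in general position. -/
theorem stmt_19 (F : Type*) [Field F] (g : Fin 4 → Submodule F (Fin 3 → F))
    (hpl : ∀ i, Module.finrank F (g i) = 1 ∨ Module.finrank F (g i) = 2)
    (hgen : latticeClosure (Set.range g) = Set.univ) :
    (∀ i, g i ≠ ⊥ ∧ g i ≠ ⊤) ∧ GeneralPosition g := by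
  open Stmt19Aux in
  have key : ∀ (q l : Submodule F (Fin 3 → F)), Module.finrank F q = 1 →
      Module.finrank F l = 2 → (∀ i, g i ∈ Stmt19Aux.SL q l) → False := by
    intro q l hq hl hcov
    have hsub : latticeClosure (Set.range g) ⊆ Stmt19Aux.SL q l :=
      latticeClosure_min (by rintro _ ⟨i, rfl⟩; exact hcov i)
        (Stmt19Aux.isSublattice_SL hq hl)
    obtain ⟨r, hr⟩ := Stmt19Aux.exists_not_mem_SL hq hl
    have : r ∈ latticeClosure (Set.range g) := by rw [hgen]; trivial
    exact hr (hsub this)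
  refine ⟨?_, ?_, ?_, ?_⟩
  · intro i
    constructor
    · intro h
      rcases hpl i with h1 | h1 <;>
        · rw [h, finrank_bot] at h1; omega
    · intro h
      rcases hpl i with h1 | h1 <;>
        · rw [h, finrank_top, Stmt19Aux.rankV] at h1; omega
  · -- antichain
    intro i j hij hle
    rcases hpl i with hi | hi <;> rcases hpl j with hj | hj
    · have heq : g i = g j := Submodule.eq_of_le_of_finrank_le hle (by omega)
      obtain ⟨k, l', hall⟩ := Stmt19Aux.idx2 i j hij
      obtain ⟨q, l, h1, h2, h3, h4, h5⟩ := Stmt19Aux.cover3 (hpl i) (hpl k) (hpl l')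
      refine key q l h1 h2 fun m => ?_
      rcases hall m with rfl | rfl | rfl | rfl
      · exact h3
      · exact heq ▸ h3
      · exact h4
      · exact h5
    · -- point below line
      obtain ⟨k, l', hall⟩ := Stmt19Aux.idx2 i j hij
      obtain ⟨q, l, h1, h2, h3, h4, h5, h6⟩ :=
        Stmt19Aux.cover4_incomp hi hj hle (hpl k) (hpl l')
      refine key q l h1 h2 fun m => ?_
      rcases hall m with rfl | rfl | rfl | rfl
      · exact h3
      · exact h4
      · exact h5
      · exact h6
    · have := Submodule.finrank_mono hle; omega
    · have heq : g i = g j := Submodule.eq_of_le_of_finrank_le hle (by omega)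
      obtain ⟨k, l', hall⟩ := Stmt19Aux.idx2 i j hij
      obtain ⟨q, l, h1, h2, h3, h4, h5⟩ := Stmt19Aux.cover3 (hpl i) (hpl k) (hpl l')
      refine key q l h1 h2 fun m => ?_
      rcases hall m with rfl | rfl | rfl | rfl
      · exact h3
      · exact heq ▸ h3
      · exact h4
      · exact h5
  · -- no three collinear points
    intro i j k hij hjk hik h1 h2 h3 hle
    obtain ⟨l', hall⟩ := Stmt19Aux.idx3 i j k hij hjk hik
    obtain ⟨q, l, hq, hl, m1, m2, m3, m4⟩ :=
      Stmt19Aux.cover4_coll h1 h2 h3 hle (hpl l')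
    refine key q l hq hl fun m => ?_
    rcases hall m with rfl | rfl | rfl | rfl
    · exact m1
    · exact m2
    · exact m3
    · exact m4
  · -- no three concurrent lines
    intro i j k hij hjk hik h1 h2 h3 hle
    obtain ⟨l', hall⟩ := Stmt19Aux.idx3 i j k hij hjk hik
    obtain ⟨q, l, hq, hl, m1, m2, m3, m4⟩ :=
      Stmt19Aux.cover4_conc h1 h2 h3 hle (hpl l')
    refine key q l hq hl fun m => ?_
    rcases hall m with rfl | rfl | rfl | rfl
    · exact m1
    · exact m2
    · exact m3
    · exact m4
end
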